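/- arXiv:2209.08813 — 3 statements merged into one kernel-verified Lean document; each statement's English description precedes it below -/
import Mathlib

section
/- The centralizer of the pure cactus group PJ_3 in J_3 is the infinite cyclic subgroup generated by s_{1,2} s_{1,3}: an element g ∈ J_3 commutes with every element of PJ_3 if and only if g is an integer power of s_{1,2} s_{1,3}, and s_{1,2} s_{1,3} has infinite order. -/
/-- The set of intervals `[p,q]`, `1 ≤ p < q ≤ n`, indexing the generators `s_{p,q}`
of the cactus group `J_n`. -/
def cactusSet (n : ℕ) : Set (ℕ × ℕ) := {pq | 1 ≤ pq.1 ∧ pq.1 < pq.2 ∧ pq.2 ≤ n}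

/-- The defining relations (j1)-(j3) of the cactus group, restricted to a collection `C`
of generating intervals: exactly those cactus relations involving only generators from `C`. -/
def cactusRels (C : Set (ℕ × ℕ)) : Set (FreeGroup C) :=
  {w | (∃ a : C, w = FreeGroup.of a * FreeGroup.of a) ∨
    (∃ a b : C, (a.1.2 < b.1.1 ∨ b.1.2 < a.1.1) ∧
      w = FreeGroup.of a * FreeGroup.of b * (FreeGroup.of a)⁻¹ * (FreeGroup.of b)⁻¹) ∨
    (∃ a b c : C, a.1.1 ≤ b.1.1 ∧ b.1.2 ≤ a.1.2 ∧
      c.1.1 = a.1.1 + a.1.2 - b.1.2 ∧ c.1.2 = a.1.1 + a.1.2 - b.1.1 ∧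
      w = FreeGroup.of a * FreeGroup.of b * (FreeGroup.of a)⁻¹ * (FreeGroup.of c)⁻¹)}

/-- The group presented by the generators `s_I`, `I ∈ C`, and those cactus relations
involving only these generators. -/
abbrev PartialCactusGroup (C : Set (ℕ × ℕ)) := PresentedGroup (cactusRels C)

/-- The cactus group `J_n`. -/
abbrev CactusGroup (n : ℕ) := PartialCactusGroup (cactusSet n)

/-- The involution of `{0,…,n-1}` underlying the permutation `w_{p,q}` (in `1`-based labelling:
the point `i` corresponds to the label `i+1 ∈ {1,…,n}`): it sends a label `i` with `p ≤ i ≤ q`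
to `p + q - i` and fixes all other labels. -/
def wFun (n p q : ℕ) (i : Fin n) : Fin n :=
  if h : 1 ≤ p ∧ p ≤ (i : ℕ) + 1 ∧ (i : ℕ) + 1 ≤ q ∧ q ≤ n then
    ⟨p + q - ((i : ℕ) + 1) - 1, by omega⟩
  else i

lemma wFun_involutive (n p q : ℕ) : Function.Involutive (wFun n p q) := by
  intro i
  unfold wFun
  by_cases h : 1 ≤ p ∧ p ≤ (i : ℕ) + 1 ∧ (i : ℕ) + 1 ≤ q ∧ q ≤ n
  · rw [dif_pos h, dif_pos (by simp only [Fin.val_mk]; omega)]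
    apply Fin.ext
    simp only [Fin.val_mk]
    omega
  · rw [dif_neg h, dif_neg h]

/-- The permutation `w_{p,q}` of `{1,…,n}` (coded on `Fin n` via `i ↦ i+1`), sending `i` to
`p+q-i` for `p ≤ i ≤ q` and fixing all other points. -/
def wPerm (n p q : ℕ) : Equiv.Perm (Fin n) :=
  Function.Involutive.toPerm (wFun n p q) (wFun_involutive n p q)

lemma wPerm_apply_val (n p q : ℕ) (i : Fin n) :
    ((wPerm n p q i : Fin n) : ℕ) =
      if 1 ≤ p ∧ p ≤ (i : ℕ) + 1 ∧ (i : ℕ) + 1 ≤ q ∧ q ≤ n then p + q - ((i : ℕ) + 1) - 1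
      else i := by
  rw [wPerm, Function.Involutive.coe_toPerm]
  unfold wFun
  split_ifs with h <;> rfl

lemma wPerm_inv (n p q : ℕ) : (wPerm n p q)⁻¹ = wPerm n p q := by
  simp [wPerm, Equiv.Perm.inv_def, Function.Involutive.toPerm_symm]

lemma wPerm_rels (n : ℕ) : ∀ r ∈ cactusRels (cactusSet n),
    FreeGroup.lift (fun a : cactusSet n => wPerm n a.1.1 a.1.2) r = 1 := by
  rintro r (⟨a, rfl⟩ | ⟨a, b, hab, rfl⟩ | ⟨a, b, c, h1, h2, h3, h4, rfl⟩) <;>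
    simp only [map_mul, map_inv, FreeGroup.lift_apply_of, wPerm_inv]
  · obtain ⟨ha1, ha2, ha3⟩ := a.2
    ext i
    simp only [Equiv.Perm.mul_apply, Equiv.Perm.one_apply, wPerm_apply_val]
    split_ifs <;> omega
  · obtain ⟨ha1, ha2, ha3⟩ := a.2
    obtain ⟨hb1, hb2, hb3⟩ := b.2
    ext i
    simp only [Equiv.Perm.mul_apply, Equiv.Perm.one_apply, wPerm_apply_val]
    split_ifs <;> omega
  · obtain ⟨ha1, ha2, ha3⟩ := a.2
    obtain ⟨hb1, hb2, hb3⟩ := b.2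
    obtain ⟨hc1, hc2, hc3⟩ := c.2
    ext i
    simp only [Equiv.Perm.mul_apply, Equiv.Perm.one_apply, wPerm_apply_val]
    split_ifs <;> omega

/-- The canonical projection `s : J_n → S_n`, sending `s_{p,q}` to `w_{p,q}`. -/
def sHom (n : ℕ) : CactusGroup n →* Equiv.Perm (Fin n) :=
  PresentedGroup.toGroup (f := fun a => wPerm n a.1.1 a.1.2) (wPerm_rels n)

/-- The pure cactus group `PJ_n`, i.e. the kernel of `s : J_n → S_n`. -/
abbrev PureCactusGroup (n : ℕ) : Subgroup (CactusGroup n) := (sHom n).ker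


/-- The generator `s_{1,2}` of `J_3`. -/
def s12 : CactusGroup 3 := PresentedGroup.of ⟨(1, 2), ⟨by omega, by omega, by omega⟩⟩

/-- The generator `s_{1,3}` of `J_3`. -/
def s13 : CactusGroup 3 := PresentedGroup.of ⟨(1, 3), ⟨by omega, by omega, by omega⟩⟩

namespace PJ3Aux

def a12 : cactusSet 3 := ⟨(1,2), ⟨by omega, by omega, by omega⟩⟩
def a13 : cactusSet 3 := ⟨(1,3), ⟨by omega, by omega, by omega⟩⟩
def a23 : cactusSet 3 := ⟨(2,3), ⟨by omega, by omega, by omega⟩⟩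

def s23 : CactusGroup 3 := PresentedGroup.of a23

lemma mk_rel_one {r : FreeGroup (cactusSet 3)} (h : r ∈ cactusRels (cactusSet 3)) :
    PresentedGroup.mk (cactusRels (cactusSet 3)) r = 1 :=
  (QuotientGroup.eq_one_iff _).2 (Subgroup.subset_normalClosure h)

lemma h12 : s12 * s12 = 1 := by
  have h := mk_rel_one (Or.inl ⟨a12, rfl⟩)
  rwa [map_mul] at h

lemma h13 : s13 * s13 = 1 := by
  have h := mk_rel_one (Or.inl ⟨a13, rfl⟩)
  rwa [map_mul] at h

lemma inv12 : s12⁻¹ = s12 := inv_eq_of_mul_eq_one_right h12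
lemma inv13 : s13⁻¹ = s13 := inv_eq_of_mul_eq_one_right h13

lemma hconj : s13 * s12 * s13⁻¹ * s23⁻¹ = 1 := by
  have h := mk_rel_one (Or.inr (Or.inr ⟨a13, a12, a23, by norm_num [a12,a13,a23],
    by norm_num [a12,a13,a23], by norm_num [a12,a13,a23], by norm_num [a12,a13,a23], rfl⟩))
  rwa [map_mul, map_mul, map_mul, map_inv, map_inv] at h

lemma s23_eq : s23 = s13 * s12 * s13 := by
  have h := hconj
  rw [inv13, mul_inv_eq_one] at h
  exact h.symm

/-- `t = s12 * s13`, the canonical "translation" generating the rotation subgroup. -/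
noncomputable abbrev t : CactusGroup 3 := s12 * s13

lemma key1 : s12 * t * s12⁻¹ = t⁻¹ := by
  rw [inv12, mul_inv_rev, inv12, inv13]
  calc s12 * (s12 * s13) * s12 = (s12 * s12) * (s13 * s12) := by group
    _ = s13 * s12 := by rw [h12, one_mul]

lemma keyk (k : ℤ) : s12 * t ^ k * s12 = t ^ (-k) := by
  have h : (s12 * t * s12⁻¹) ^ k = s12 * t ^ k * s12⁻¹ := conj_zpow
  rw [key1, inv_zpow, inv12] at h
  rw [← h, zpow_neg]

lemma swapk (k : ℤ) : t ^ k * s12 = s12 * t ^ (-k) := by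
  calc t ^ k * s12 = s12 * (s12 * t ^ k * s12) := by
        rw [← mul_assoc, ← mul_assoc, h12, one_mul]
    _ = s12 * t ^ (-k) := by rw [keyk]

/-- Normal-form subgroup: everything is `t^k` or `s12 * t^k`. -/
noncomputable def S : Subgroup (CactusGroup 3) where
  carrier := {g | ∃ k : ℤ, g = t ^ k ∨ g = s12 * t ^ k}
  one_mem' := ⟨0, Or.inl (by simp)⟩
  mul_mem' := by
    rintro x y ⟨i, hi | hi⟩ ⟨j, hj | hj⟩ <;> subst hi hj
    · exact ⟨i + j, Or.inl (zpow_add t i j).symm⟩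
    · refine ⟨j - i, Or.inr ?_⟩
      calc t ^ i * (s12 * t ^ j) = (t ^ i * s12) * t ^ j := by rw [mul_assoc]
        _ = s12 * (t ^ (-i) * t ^ j) := by rw [swapk, mul_assoc]
        _ = s12 * t ^ (j - i) := by rw [← zpow_add]; ring_nf
    · exact ⟨i + j, Or.inr (by rw [mul_assoc, ← zpow_add])⟩
    · refine ⟨j - i, Or.inl ?_⟩
      calc s12 * t ^ i * (s12 * t ^ j) = (s12 * t ^ i * s12) * t ^ j := by group
        _ = t ^ (-i) * t ^ j := by rw [keyk]
        _ = t ^ (j - i) := by rw [← zpow_add]; ring_nf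
  inv_mem' := by
    rintro x ⟨k, hk | hk⟩ <;> subst hk
    · exact ⟨-k, Or.inl (zpow_neg t k).symm⟩
    · refine ⟨k, Or.inr ?_⟩
      rw [mul_inv_rev, inv12, ← zpow_neg, swapk]
      ring_nf

lemma mem_cases (j : cactusSet 3) : j = a12 ∨ j = a13 ∨ j = a23 := by
  obtain ⟨⟨p, q⟩, hp, hpq, hq⟩ := j
  simp only [a12, a13, a23, Subtype.ext_iff, Subtype.mk.injEq, Prod.mk.injEq]
  omega

lemma normal_form (g : CactusGroup 3) : ∃ k : ℤ, g = t ^ k ∨ g = s12 * t ^ k := by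
  refine PresentedGroup.generated_by _ S ?_ g
  intro j
  rcases mem_cases j with rfl | rfl | rfl
  · exact ⟨0, Or.inr (by simp [s12, a12, PresentedGroup.of])⟩
  · refine ⟨1, Or.inr ?_⟩
    show s13 = s12 * t ^ (1 : ℤ)
    rw [zpow_one, ← mul_assoc, h12, one_mul]
  · refine ⟨2, Or.inr ?_⟩
    show s23 = s12 * t ^ (2 : ℤ)
    rw [s23_eq]
    calc s13 * s12 * s13 = s12 * ((s12 * s13) * (s12 * s13)) := by
          rw [← mul_assoc, ← mul_assoc, ← mul_assoc, h12, one_mul]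
      _ = s12 * t ^ (2 : ℤ) := by rw [← pow_two, ← zpow_natCast]; norm_num

/-- Reflection `x ↦ c - x` of `ℤ`. -/
def rho (c : ℤ) : Equiv.Perm ℤ :=
  Function.Involutive.toPerm (fun x => c - x) (fun x => by show c - (c - x) = x; omega)

lemma rho_apply (c x : ℤ) : rho c x = c - x := rfl

lemma rho_inv (c : ℤ) : (rho c)⁻¹ = rho c := by
  simp [rho, Equiv.Perm.inv_def, Function.Involutive.toPerm_symm]
  exact Function.Involutive.toPerm_symm _

lemma phi_rels : ∀ r ∈ cactusRels (cactusSet 3),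
    FreeGroup.lift (fun a : cactusSet 3 => rho ((a.1.1 : ℤ) + a.1.2 - 3)) r = 1 := by
  rintro r (⟨a, rfl⟩ | ⟨a, b, hab, rfl⟩ | ⟨a, b, c, h1, h2, h3, h4, rfl⟩) <;>
    simp only [map_mul, map_inv, FreeGroup.lift_apply_of, rho_inv]
  · ext x
    simp only [Equiv.Perm.mul_apply, Equiv.Perm.one_apply, rho_apply]
    ring
  · obtain ⟨ha1, ha2, ha3⟩ := a.2
    obtain ⟨hb1, hb2, hb3⟩ := b.2
    omega
  · obtain ⟨ha1, ha2, ha3⟩ := a.2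
    obtain ⟨hb1, hb2, hb3⟩ := b.2
    obtain ⟨hc1, hc2, hc3⟩ := c.2
    ext x
    simp only [Equiv.Perm.mul_apply, Equiv.Perm.one_apply, rho_apply]
    omega

noncomputable def phi : CactusGroup 3 →* Equiv.Perm ℤ := PresentedGroup.toGroup phi_rels

lemma phi_s12 : phi s12 = rho 0 := by
  have : phi (PresentedGroup.of a12) = rho ((1:ℤ) + 2 - 3) := PresentedGroup.toGroup.of phi_rels
  norm_num at this
  exact this

lemma phi_s13 : phi s13 = rho 1 := by
  have : phi (PresentedGroup.of a13) = rho ((1:ℤ) + 3 - 3) := PresentedGroup.toGroup.of phi_rels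
  norm_num at this
  exact this

lemma phi_t : phi t = Equiv.addRight (-1 : ℤ) := by
  rw [map_mul, phi_s12, phi_s13]
  ext x
  show (0 : ℤ) - ((1 : ℤ) - x) = x + (-1)
  omega

lemma tpow_ne_one {k : ℤ} (hk : k ≠ 0) : t ^ k ≠ 1 := by
  intro h
  have h2 : (phi t) ^ k = 1 := by rw [← map_zpow, h, map_one]
  rw [phi_t, Equiv.zsmul_addRight] at h2
  have := congrArg (fun e : Equiv.Perm ℤ => e 0) h2
  simp at this
  omega

lemma sHom_s12 : sHom 3 s12 = wPerm 3 1 2 := PresentedGroup.toGroup.of (wPerm_rels 3)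
lemma sHom_s13 : sHom 3 s13 = wPerm 3 1 3 := PresentedGroup.toGroup.of (wPerm_rels 3)

lemma t3_mem : t ^ (3 : ℤ) ∈ PureCactusGroup 3 := by
  show sHom 3 (t ^ (3 : ℤ)) = 1
  rw [map_zpow, map_mul, sHom_s12, sHom_s13]
  show ((wPerm 3 1 2 * wPerm 3 1 3) ^ (3 : ℤ)) = 1
  norm_num [zpow_ofNat]
  decide

lemma sign_s12 : Equiv.Perm.sign (sHom 3 s12) = -1 := by
  rw [sHom_s12]
  decide

lemma sign_t : Equiv.Perm.sign (sHom 3 t) = 1 := by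
  rw [map_mul, map_mul, sHom_s12, sHom_s13]
  decide

/-- Elements of the pure cactus group are powers of `t`. -/
lemma pure_is_tpow {x : CactusGroup 3} (hx : x ∈ PureCactusGroup 3) :
    ∃ k : ℤ, x = t ^ k := by
  obtain ⟨k, hk | hk⟩ := normal_form x
  · exact ⟨k, hk⟩
  · exfalso
    have h1 : sHom 3 x = 1 := hx
    rw [hk, map_mul, map_zpow] at h1
    have h2 := congrArg Equiv.Perm.sign h1
    rw [map_mul, map_zpow, sign_s12, sign_t, one_zpow, mul_one, map_one] at h2
    exact absurd h2 (by decide)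

end PJ3Aux

/-- The centralizer of `PJ_3` in `J_3` is the infinite cyclic subgroup
generated by `s_{1,2} s_{1,3}`. -/
theorem pj3_centralizer :
    (∀ g : CactusGroup 3,
      (∀ x ∈ PureCactusGroup 3, g * x = x * g) ↔ g ∈ Subgroup.zpowers (s12 * s13)) ∧
    ¬ IsOfFinOrder (s12 * s13) := by
  open PJ3Aux in
  constructor
  · intro g
    constructor
    · intro hg
      obtain ⟨k, hk | hk⟩ := normal_form g
      · exact Subgroup.mem_zpowers_iff.2 ⟨k, hk.symm⟩
      · exfalso
        have h3 := hg (t ^ (3 : ℤ)) t3_mem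
        rw [hk] at h3
        have hL : s12 * t ^ k * t ^ (3:ℤ) = s12 * t ^ (k + 3) := by
          rw [mul_assoc, ← zpow_add]
        have hR : t ^ (3:ℤ) * (s12 * t ^ k) = s12 * t ^ (-3 + k) := by
          rw [← mul_assoc, swapk, mul_assoc, ← zpow_add]
        rw [hL, hR] at h3
        have h6 : t ^ (6 : ℤ) = 1 := by
          have heq : t ^ (k + 3) = t ^ (-3 + k) := mul_left_cancel h3
          have h7 : t ^ ((k + 3) - (-3 + k)) = 1 := by
            rw [zpow_sub, heq, mul_inv_cancel]
          have h8 : ((k + 3) - (-3 + k) : ℤ) = 6 := by ring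
          rwa [h8] at h7
        exact tpow_ne_one (by norm_num) h6
    · intro hmem x hx
      obtain ⟨m, hm⟩ := Subgroup.mem_zpowers_iff.1 hmem
      obtain ⟨k, hk⟩ := pure_is_tpow hx
      subst hk
      rw [← hm]
      exact (zpow_mul_comm t m k)
  · intro hfin
    obtain ⟨n, hn, h1⟩ := isOfFinOrder_iff_pow_eq_one.mp hfin
    refine PJ3Aux.tpow_ne_one (k := (n : ℤ)) (by exact_mod_cast hn.ne') ?_
    rw [zpow_natCast]
    exact h1
end

section
/- For every 2 ≤ i ≤ n: (a) there is a well-defined group homomorphism ε_i : J_n → D_n^i ⋊ S_n determined on generators by s_{p,q} ↦ (1, 1) if q−p+1 < i, s_{p,q} ↦ (τ_{[p,q]}, w_{p,q}) if q−p+1 = i, and s_{p,q} ↦ (1, w_{p,q}) if q−p+1 > i; (b) the group homomorphism J_n^{i,i} → D_n^i ⋊ S_n determined on generators by s_{p,q} ↦ (τ_{[p,q]}, w_{p,q}) is injective. -/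
/-- The subset `{p, p+1, …, q}` of `{1,…,n}`, coded inside `Fin n` via `i ↦ i+1`. -/
def intervalFinset (n p q : ℕ) : Finset (Fin n) :=
  Finset.univ.filter (fun i => p ≤ (i : ℕ) + 1 ∧ (i : ℕ) + 1 ≤ q)

lemma two_le_intervalFinset_card {n p q : ℕ} (h : (p, q) ∈ cactusSet n) :
    2 ≤ (intervalFinset n p q).card := by
  obtain ⟨h1, h2, h3⟩ := h
  have hp : (⟨p - 1, by omega⟩ : Fin n) ∈ intervalFinset n p q := by
    simp only [intervalFinset, Finset.mem_filter, Finset.mem_univ, true_and]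
    omega
  have hq : (⟨q - 1, by omega⟩ : Fin n) ∈ intervalFinset n p q := by
    simp only [intervalFinset, Finset.mem_filter, Finset.mem_univ, true_and]
    omega
  have := Finset.one_lt_card.mpr ⟨_, hp, _, hq, by simp only [ne_eq, Fin.mk.injEq]; omega⟩
  omega

lemma intervalFinset_card {n p q : ℕ} (h1 : 1 ≤ p) (h3 : q ≤ n) :
    (intervalFinset n p q).card = q + 1 - p := by
  have himg : (intervalFinset n p q).image Fin.val = Finset.Ico (p - 1) q := by
    ext x
    simp only [intervalFinset, Finset.mem_image, Finset.mem_filter, Finset.mem_univ, true_and,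
      Finset.mem_Ico]
    constructor
    · rintro ⟨i, hi, rfl⟩
      omega
    · rintro ⟨hx1, hx2⟩
      exact ⟨⟨x, by omega⟩, by simp only [Fin.val_mk]; omega, rfl⟩
  have hcard : (intervalFinset n p q).card = (Finset.Ico (p - 1) q).card := by
    rw [← himg, Finset.card_image_of_injective _ Fin.val_injective]
  rw [hcard, Nat.card_Ico]
  omega

/-- The generating intervals of `J_n^{i,j}`: those `[p,q]` whose leaf number `q-p+1`
lies between `i` and `j`. -/
def sliceSet (n i j : ℕ) : Set (ℕ × ℕ) :=
  {pq | pq ∈ cactusSet n ∧ i ≤ pq.2 - pq.1 + 1 ∧ pq.2 - pq.1 + 1 ≤ j}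

/-- The group `J_n^{i,j}`, presented by the generators `s_{p,q}` with `i ≤ q-p+1 ≤ j` and those
cactus relations involving only such generators. -/
abbrev SliceCactusGroup (n i j : ℕ) := PartialCactusGroup (sliceSet n i j)

/-- Generators of the width-`i` Gauss diagram group `D_n^i`: `i`-element subsets of `{1,…,n}`. -/
abbrev GaussIGen (n i : ℕ) := {I : Finset (Fin n) // I.card = i}

/-- The defining relations of the width-`i` Gauss diagram group `D_n^i`. -/
def gaussIRels (n i : ℕ) : Set (FreeGroup (GaussIGen n i)) :=
  {w | (∃ a : GaussIGen n i, w = FreeGroup.of a * FreeGroup.of a) ∨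
    (∃ a b : GaussIGen n i, Disjoint a.1 b.1 ∧
      w = FreeGroup.of a * FreeGroup.of b * (FreeGroup.of a)⁻¹ * (FreeGroup.of b)⁻¹)}

/-- The width-`i` Gauss diagram group `D_n^i`. -/
abbrev GaussIGroup (n i : ℕ) := PresentedGroup (gaussIRels n i)

lemma gaussIRel_one {n i : ℕ} {r : FreeGroup (GaussIGen n i)} (h : r ∈ gaussIRels n i) :
    PresentedGroup.mk (gaussIRels n i) r = 1 :=
  (QuotientGroup.eq_one_iff _).mpr (Subgroup.subset_normalClosure h)

/-- The action of a permutation on the generators of `D_n^i`: `σ • τ_I = τ_{σ(I)}`. -/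
def permGenI (n i : ℕ) (σ : Equiv.Perm (Fin n)) (a : GaussIGen n i) : GaussIGen n i :=
  ⟨a.1.image σ, by rw [Finset.card_image_of_injective _ σ.injective]; exact a.2⟩

lemma permGenI_rels (n i : ℕ) (σ : Equiv.Perm (Fin n)) : ∀ r ∈ gaussIRels n i,
    FreeGroup.lift (fun a => (PresentedGroup.of (rels := gaussIRels n i) (permGenI n i σ a))) r
      = 1 := by
  rintro r (⟨a, rfl⟩ | ⟨a, b, hab, rfl⟩)
  · have h1 : (PresentedGroup.mk (gaussIRels n i))
        (FreeGroup.of (permGenI n i σ a) * FreeGroup.of (permGenI n i σ a)) = 1 :=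
      gaussIRel_one (Or.inl ⟨permGenI n i σ a, rfl⟩)
    rw [map_mul] at h1
    simp
    exact h1
  · have hab' : Disjoint (permGenI n i σ a).1 (permGenI n i σ b).1 :=
      (Finset.disjoint_image σ.injective).mpr hab
    have h1 : (PresentedGroup.mk (gaussIRels n i))
        (FreeGroup.of (permGenI n i σ a) * FreeGroup.of (permGenI n i σ b) *
          (FreeGroup.of (permGenI n i σ a))⁻¹ * (FreeGroup.of (permGenI n i σ b))⁻¹) = 1 :=
      gaussIRel_one (Or.inr ⟨permGenI n i σ a, permGenI n i σ b, hab', rfl⟩)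
    rw [map_mul, map_mul, map_mul, map_inv, map_inv] at h1
    simp
    exact h1

/-- The endomorphism of `D_n^i` induced by a permutation. -/
def permHomI (n i : ℕ) (σ : Equiv.Perm (Fin n)) : GaussIGroup n i →* GaussIGroup n i :=
  PresentedGroup.toGroup (permGenI_rels n i σ)

lemma permHomI_of (n i : ℕ) (σ : Equiv.Perm (Fin n)) (a : GaussIGen n i) :
    permHomI n i σ (PresentedGroup.of a) = PresentedGroup.of (permGenI n i σ a) :=
  PresentedGroup.toGroup.of _

lemma permHomI_comp (n i : ℕ) (σ τ : Equiv.Perm (Fin n)) :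
    (permHomI n i σ).comp (permHomI n i τ) = permHomI n i (σ * τ) := by
  ext x
  simp only [MonoidHom.comp_apply, permHomI_of]
  congr 1
  apply Subtype.ext
  simp only [permGenI, Finset.image_image]
  rfl

lemma permHomI_one (n i : ℕ) : permHomI n i 1 = MonoidHom.id (GaussIGroup n i) := by
  ext x
  simp only [MonoidHom.id_apply, permHomI_of]
  congr 1
  apply Subtype.ext
  simp [permGenI]

lemma permHomI_apply_apply (n i : ℕ) (σ τ : Equiv.Perm (Fin n)) (x : GaussIGroup n i) :
    permHomI n i σ (permHomI n i τ x) = permHomI n i (σ * τ) x :=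
  DFunLike.congr_fun (permHomI_comp n i σ τ) x

/-- The action of `S_n` on `D_n^i` by `σ • τ_I = τ_{σ(I)}`, as a homomorphism to automorphisms. -/
def permAutI (n i : ℕ) : Equiv.Perm (Fin n) →* MulAut (GaussIGroup n i) where
  toFun σ :=
    { toFun := permHomI n i σ
      invFun := permHomI n i σ⁻¹
      left_inv := fun x => by
        rw [permHomI_apply_apply, inv_mul_cancel, permHomI_one, MonoidHom.id_apply]
      right_inv := fun x => by
        rw [permHomI_apply_apply, mul_inv_cancel, permHomI_one, MonoidHom.id_apply]
      map_mul' := map_mul _ }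
  map_one' := by
    apply MulEquiv.ext
    intro x
    simp only [MulEquiv.coe_mk, Equiv.coe_fn_mk]
    rw [permHomI_one]
    rfl
  map_mul' := fun σ τ => by
    apply MulEquiv.ext
    intro x
    simp only [MulEquiv.coe_mk, Equiv.coe_fn_mk, MulAut.mul_apply]
    exact (permHomI_apply_apply n i σ τ x).symm


namespace Eraser

variable {n : ℕ}

lemma wPerm_coe (n p q : ℕ) : ⇑(wPerm n p q) = wFun n p q := rfl

lemma wPerm_sq (n p q : ℕ) : wPerm n p q * wPerm n p q = 1 := by
  ext j
  simp [Equiv.Perm.mul_apply, wPerm_coe, wFun_involutive n p q j]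

lemma mem_intervalFinset {p q : ℕ} {j : Fin n} :
    j ∈ intervalFinset n p q ↔ p ≤ (j : ℕ) + 1 ∧ (j : ℕ) + 1 ≤ q := by
  simp [intervalFinset]

lemma wFun_val_eq (p q : ℕ) (j : Fin n) :
    ((wFun n p q j : Fin n) : ℕ) =
      if 1 ≤ p ∧ p ≤ (j : ℕ) + 1 ∧ (j : ℕ) + 1 ≤ q ∧ q ≤ n then p + q - ((j : ℕ) + 1) - 1
      else (j : ℕ) := by
  unfold wFun
  split_ifs <;> simp

lemma wPerm_comm (p q m r : ℕ) (h : q < m ∨ r < p) :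
    wPerm n p q * wPerm n m r = wPerm n m r * wPerm n p q := by
  ext j
  simp only [Equiv.Perm.mul_apply, wPerm_coe]

  simp only [wFun_val_eq]
  split_ifs <;> omega

lemma wPerm_conj (p q m r : ℕ) (h1 : 1 ≤ p) (h2 : p ≤ m) (h3 : m < r) (h4 : r ≤ q)
    (h5 : q ≤ n) :
    wPerm n p q * wPerm n m r * wPerm n p q = wPerm n (p + q - r) (p + q - m) := by
  ext j
  simp only [Equiv.Perm.mul_apply, wPerm_coe]

  simp only [wFun_val_eq]
  split_ifs <;> omega

lemma mem_image_wPerm {p q : ℕ} {s : Finset (Fin n)} {x : Fin n} :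
    x ∈ s.image (wPerm n p q) ↔ wPerm n p q x ∈ s := by
  constructor
  · intro h
    obtain ⟨y, hy, rfl⟩ := Finset.mem_image.mp h
    rwa [show wPerm n p q (wPerm n p q y) = y from wFun_involutive n p q y]
  · intro h
    exact Finset.mem_image.mpr ⟨_, h, wFun_involutive n p q x⟩

lemma image_wPerm_self (p q : ℕ) (h1 : 1 ≤ p) (h5 : q ≤ n) :
    (intervalFinset n p q).image (wPerm n p q) = intervalFinset n p q := by
  ext x
  rw [mem_image_wPerm, mem_intervalFinset, mem_intervalFinset]
  simp only [wPerm_coe, wFun_val_eq]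
  split_ifs <;> omega

lemma image_wPerm_disjoint (p q m r : ℕ) (h : q < m ∨ r < p) :
    (intervalFinset n m r).image (wPerm n p q) = intervalFinset n m r := by
  ext x
  rw [mem_image_wPerm, mem_intervalFinset, mem_intervalFinset]
  simp only [wPerm_coe, wFun_val_eq]
  split_ifs <;> omega

lemma image_wPerm_nested (p q m r : ℕ) (h1 : 1 ≤ p) (h2 : p ≤ m) (h3 : m ≤ r) (h4 : r ≤ q)
    (h5 : q ≤ n) :
    (intervalFinset n m r).image (wPerm n p q) = intervalFinset n (p + q - r) (p + q - m) := by
  ext x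
  rw [mem_image_wPerm, mem_intervalFinset, mem_intervalFinset]
  simp only [wPerm_coe, wFun_val_eq]
  split_ifs <;> omega

lemma intervals_disjoint_of_disjoint {p q m r : ℕ} (h1 : 1 ≤ p) (h2 : p < q) (h3 : q ≤ n)
    (h4 : 1 ≤ m) (h5 : m < r) (h6 : r ≤ n)
    (h : Disjoint (intervalFinset n p q) (intervalFinset n m r)) : q < m ∨ r < p := by
  by_contra hc
  push_neg at hc
  have hj1 : (⟨max p m - 1, by omega⟩ : Fin n) ∈ intervalFinset n p q := by
    rw [mem_intervalFinset]; simp; omega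
  have hj2 : (⟨max p m - 1, by omega⟩ : Fin n) ∈ intervalFinset n m r := by
    rw [mem_intervalFinset]; simp; omega
  exact (Finset.disjoint_left.mp h hj1) hj2

lemma intervalFinset_inj {p q m r : ℕ} (h1 : 1 ≤ p) (h2 : p < q) (h3 : q ≤ n)
    (h4 : 1 ≤ m) (h5 : m < r) (h6 : r ≤ n)
    (h : intervalFinset n p q = intervalFinset n m r) : p = m ∧ q = r := by
  have e := Finset.ext_iff.mp h
  have e1 := (e ⟨p - 1, by omega⟩)
  have e2 := (e ⟨q - 1, by omega⟩)
  have e3 := (e ⟨m - 1, by omega⟩)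
  have e4 := (e ⟨r - 1, by omega⟩)
  simp only [mem_intervalFinset] at e1 e2 e3 e4
  omega

end Eraser
namespace Eraser

variable {n i : ℕ}

/-! ### Rewriting machinery for the right-angled Coxeter group `D_n^i` -/

def cancel (a : GaussIGen n i) : List (GaussIGen n i) → Option (List (GaussIGen n i))
  | [] => none
  | x :: t => if x = a then some t
      else if Disjoint x.1 a.1 then (cancel a t).map (x :: ·) else none

def Red : List (GaussIGen n i) → Prop
  | [] => True
  | x :: t => cancel x t = none ∧ Red t

inductive Swp : List (GaussIGen n i) → List (GaussIGen n i) → Prop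
  | mk (l₁ l₂ : List (GaussIGen n i)) (a b : GaussIGen n i) (h : Disjoint a.1 b.1) :
      Swp (l₁ ++ a :: b :: l₂) (l₁ ++ b :: a :: l₂)

def sw : List (GaussIGen n i) → List (GaussIGen n i) → Prop := Relation.ReflTransGen Swp

lemma Swp.symm' {w w' : List (GaussIGen n i)} (h : Swp w w') : Swp w' w := by
  cases h with
  | mk l₁ l₂ a b h => exact Swp.mk l₁ l₂ b a h.symm

lemma sw_refl (w : List (GaussIGen n i)) : sw w w := Relation.ReflTransGen.refl

lemma sw_trans {u v w : List (GaussIGen n i)} (h1 : sw u v) (h2 : sw v w) : sw u w :=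
  Relation.ReflTransGen.trans h1 h2

lemma sw_symm {u v : List (GaussIGen n i)} (h : sw u v) : sw v u :=
  by
    haveI : Std.Symm (Swp (n := n) (i := i)) := ⟨fun _ _ h => h.symm'⟩
    exact Std.Symm.symm (r := Relation.ReflTransGen Swp) _ _ h

lemma Swp.cons {t t' : List (GaussIGen n i)} (x : GaussIGen n i) (h : Swp t t') :
    Swp (x :: t) (x :: t') := by
  cases h with
  | mk l₁ l₂ a b h => exact Swp.mk (x :: l₁) l₂ a b h

lemma sw_cons {t t' : List (GaussIGen n i)} (x : GaussIGen n i) (h : sw t t') :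
    sw (x :: t) (x :: t') :=
  Relation.ReflTransGen.lift (r := Swp) (p := Swp) (x :: ·) (fun _ _ h => h.cons x) _ _ h

lemma Swp.length {w w' : List (GaussIGen n i)} (h : Swp w w') : w.length = w'.length := by
  cases h with
  | mk l₁ l₂ a b h => simp

lemma sw_length {w w' : List (GaussIGen n i)} (h : sw w w') : w.length = w'.length := by
  induction h with
  | refl => rfl
  | tail _ h ih => exact ih.trans h.length

lemma sw_nil {w : List (GaussIGen n i)} (h : sw w []) : w = [] :=
  List.length_eq_zero_iff.mp (sw_length h)

lemma dj_ne (hi : 0 < i) {a b : GaussIGen n i} (h : Disjoint a.1 b.1) : a ≠ b := by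
  rintro rfl
  rw [disjoint_self] at h
  have := a.2
  rw [h] at this
  simp at this
  omega

lemma cancel_decomp {a : GaussIGen n i} : ∀ {w u : List (GaussIGen n i)},
    cancel a w = some u →
    ∃ l₁ l₂, w = l₁ ++ a :: l₂ ∧ u = l₁ ++ l₂ ∧ ∀ x ∈ l₁, x ≠ a ∧ Disjoint x.1 a.1
  | [], u => by simp [cancel]
  | x :: t, u => by
    intro h
    rw [cancel] at h
    split_ifs at h with h1 h2
    · subst h1
      simp only [Option.some.injEq] at h
      subst h
      exact ⟨[], t, rfl, rfl, by simp⟩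
    · obtain ⟨u', hu', rfl⟩ := Option.map_eq_some_iff.mp h
      obtain ⟨l₁, l₂, rfl, rfl, hl⟩ := cancel_decomp hu'
      exact ⟨x :: l₁, l₂, rfl, rfl, by
        intro y hy
        rcases List.mem_cons.mp hy with rfl | hy
        · exact ⟨h1, h2⟩
        · exact hl y hy⟩

lemma cancel_append_left {a : GaussIGen n i} : ∀ {l₁ : List (GaussIGen n i)}
    (_ : ∀ x ∈ l₁, x ≠ a ∧ Disjoint x.1 a.1) (w : List (GaussIGen n i)),
    cancel a (l₁ ++ w) = (cancel a w).map (l₁ ++ ·)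
  | [], _, w => by cases h : cancel a w <;> simp [h]
  | x :: l₁, h, w => by
    have hx := h x (by simp)
    rw [List.cons_append, cancel, if_neg hx.1, if_pos hx.2,
      cancel_append_left (fun y hy => h y (List.mem_cons_of_mem _ hy)) w]
    cases h : cancel a w <;> simp [h]

/-- Deleting a visible occurrence of `a` does not create a visible occurrence of a letter
`b` disjoint from `a`. -/
lemma cancel_none_of_del {a b : GaussIGen n i} (hab : Disjoint b.1 a.1) :
    ∀ {t v : List (GaussIGen n i)}, cancel a t = some v → cancel b t = none →
      cancel b v = none
  | [], v => by simp [cancel]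
  | x :: t, v => by
    intro hc hn
    rw [cancel] at hc hn
    by_cases hxa : x = a
    · subst hxa
      obtain rfl : t = v := by rw [if_pos rfl] at hc; injection hc
      have hxb : ¬ x = b := by
        rintro rfl
        rw [if_pos rfl] at hn
        exact nomatch hn
      rw [if_neg hxb, if_pos hab.symm] at hn
      exact Option.map_eq_none_iff.mp hn
    · rw [if_neg hxa] at hc
      by_cases hxd : Disjoint x.1 a.1
      · rw [if_pos hxd] at hc
        obtain ⟨v', hv', rfl⟩ := Option.map_eq_some_iff.mp hc
        have hxb : ¬ x = b := by
          rintro rfl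
          rw [if_pos rfl] at hn
          exact nomatch hn
        rw [if_neg hxb] at hn
        rw [cancel, if_neg hxb]
        by_cases hxdb : Disjoint x.1 b.1
        · rw [if_pos hxdb] at hn
          rw [if_pos hxdb, cancel_none_of_del hab hv' (Option.map_eq_none_iff.mp hn)]
          rfl
        · rw [if_neg hxdb]
      · rw [if_neg hxd] at hc
        exact nomatch hc

/-- Two visible cancellations by distinct letters commute. -/
lemma cancel_comm {a b : GaussIGen n i} (hne : a ≠ b) :
    ∀ {w u v : List (GaussIGen n i)}, cancel a w = some u → cancel b w = some v →
      ∃ z, cancel b u = some z ∧ cancel a v = some z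
  | [], u, v => by simp [cancel]
  | x :: t, u, v => by
    intro ha hb
    rw [cancel] at ha hb
    by_cases hxa : x = a
    · subst hxa
      rw [if_pos rfl] at ha
      obtain rfl : t = u := by injection ha
      rw [if_neg hne] at hb
      by_cases hd : Disjoint x.1 b.1
      · rw [if_pos hd] at hb
        obtain ⟨v', hv', rfl⟩ := Option.map_eq_some_iff.mp hb
        refine ⟨v', hv', ?_⟩
        rw [cancel, if_pos rfl]
      · rw [if_neg hd] at hb
        exact nomatch hb
    · by_cases hxb : x = b
      · subst hxb
        rw [if_pos rfl] at hb
        obtain rfl : t = v := by injection hb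
        rw [if_neg hxa] at ha
        by_cases hd : Disjoint x.1 a.1
        · rw [if_pos hd] at ha
          obtain ⟨u', hu', rfl⟩ := Option.map_eq_some_iff.mp ha
          refine ⟨u', ?_, hu'⟩
          rw [cancel, if_pos rfl]
        · rw [if_neg hd] at ha
          exact nomatch ha
      · rw [if_neg hxa] at ha
        rw [if_neg hxb] at hb
        by_cases hda : Disjoint x.1 a.1
        · rw [if_pos hda] at ha
          by_cases hdb : Disjoint x.1 b.1
          · rw [if_pos hdb] at hb
            obtain ⟨u', hu', rfl⟩ := Option.map_eq_some_iff.mp ha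
            obtain ⟨v', hv', rfl⟩ := Option.map_eq_some_iff.mp hb
            obtain ⟨z, hz1, hz2⟩ := cancel_comm hne hu' hv'
            refine ⟨x :: z, ?_, ?_⟩
            · rw [cancel, if_neg hxb, if_pos hdb, hz1]; rfl
            · rw [cancel, if_neg hxa, if_pos hda, hz2]; rfl
          · rw [if_neg hdb] at hb
            exact nomatch hb
        · rw [if_neg hda] at ha
          exact nomatch ha

lemma Red_tail {x : GaussIGen n i} {t : List (GaussIGen n i)} (h : Red (x :: t)) : Red t := h.2

lemma Red_suffix : ∀ {l₁ t : List (GaussIGen n i)}, Red (l₁ ++ t) → Red t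
  | [], t => id
  | x :: l₁, t => fun h => Red_suffix (Red_tail h)

lemma Red_cancel {a : GaussIGen n i} : ∀ {w u : List (GaussIGen n i)},
    Red w → cancel a w = some u → Red u
  | [], u => by simp [cancel]
  | x :: t, u => by
    intro hw hc
    rw [cancel] at hc
    by_cases hxa : x = a
    · rw [if_pos hxa] at hc
      obtain rfl : t = u := by injection hc
      exact hw.2
    · rw [if_neg hxa] at hc
      by_cases hd : Disjoint x.1 a.1
      · rw [if_pos hd] at hc
        obtain ⟨u', hu', rfl⟩ := Option.map_eq_some_iff.mp hc
        exact ⟨cancel_none_of_del hd hu' hw.1, Red_cancel hw.2 hu'⟩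
      · rw [if_neg hd] at hc
        exact nomatch hc

lemma cancel_cancel_none {a : GaussIGen n i} {w u : List (GaussIGen n i)}
    (hw : Red w) (hc : cancel a w = some u) : cancel a u = none := by
  obtain ⟨l₁, l₂, rfl, rfl, hl⟩ := cancel_decomp hc
  rw [cancel_append_left hl]
  have h2 : Red (a :: l₂) := Red_suffix hw
  rw [h2.1]
  rfl
lemma cancel_swp (hi : 0 < i) {w w' : List (GaussIGen n i)} (h : Swp w w')
    (a : GaussIGen n i) :
    (cancel a w = none ∧ cancel a w' = none) ∨
      ∃ u u', cancel a w = some u ∧ cancel a w' = some u' ∧ sw u u' := by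
  obtain ⟨l₁, l₂, x, y, hxy⟩ := h
  induction l₁ with
  | nil =>
    simp only [List.nil_append]
    have hyx : y ≠ x := dj_ne hi hxy.symm
    have hxyne : x ≠ y := dj_ne hi hxy
    by_cases hxa : x = a
    · subst hxa
      right
      refine ⟨y :: l₂, y :: l₂, ?_, ?_, sw_refl _⟩
      · rw [cancel, if_pos rfl]
      · rw [cancel, if_neg hyx, if_pos hxy.symm, cancel, if_pos rfl]; rfl
    · by_cases hya : y = a
      · subst hya
        right
        refine ⟨x :: l₂, x :: l₂, ?_, ?_, sw_refl _⟩
        · rw [cancel, if_neg hxa, if_pos hxy, cancel, if_pos rfl]; rfl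
        · rw [cancel, if_pos rfl]
      · by_cases hdx : Disjoint x.1 a.1
        · by_cases hdy : Disjoint y.1 a.1
          · cases hc : cancel a l₂ with
            | none =>
              left
              constructor
              · rw [cancel, if_neg hxa, if_pos hdx, cancel, if_neg hya, if_pos hdy, hc]; rfl
              · rw [cancel, if_neg hya, if_pos hdy, cancel, if_neg hxa, if_pos hdx, hc]; rfl
            | some u =>
              right
              refine ⟨x :: y :: u, y :: x :: u, ?_, ?_,
                Relation.ReflTransGen.single (Swp.mk [] u x y hxy)⟩
              · rw [cancel, if_neg hxa, if_pos hdx, cancel, if_neg hya, if_pos hdy, hc]; rfl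
              · rw [cancel, if_neg hya, if_pos hdy, cancel, if_neg hxa, if_pos hdx, hc]; rfl
          · left
            constructor
            · rw [cancel, if_neg hxa, if_pos hdx, cancel, if_neg hya, if_neg hdy]; rfl
            · rw [cancel, if_neg hya, if_neg hdy]
        · by_cases hdy : Disjoint y.1 a.1
          · left
            constructor
            · rw [cancel, if_neg hxa, if_neg hdx]
            · rw [cancel, if_neg hya, if_pos hdy, cancel, if_neg hxa, if_neg hdx]; rfl
          · left
            constructor
            · rw [cancel, if_neg hxa, if_neg hdx]
            · rw [cancel, if_neg hya, if_neg hdy]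
  | cons z l₁ ih =>
    simp only [List.cons_append]
    by_cases hza : z = a
    · right
      exact ⟨l₁ ++ x :: y :: l₂, l₁ ++ y :: x :: l₂,
        by rw [cancel, if_pos hza], by rw [cancel, if_pos hza],
        Relation.ReflTransGen.single (Swp.mk l₁ l₂ x y hxy)⟩
    · by_cases hdz : Disjoint z.1 a.1
      · rcases ih with ⟨h1, h2⟩ | ⟨u, u', h1, h2, h3⟩
        · left
          constructor
          · rw [cancel, if_neg hza, if_pos hdz, h1]; rfl
          · rw [cancel, if_neg hza, if_pos hdz, h2]; rfl
        · right
          exact ⟨z :: u, z :: u',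
            by rw [cancel, if_neg hza, if_pos hdz, h1]; rfl,
            by rw [cancel, if_neg hza, if_pos hdz, h2]; rfl,
            sw_cons z h3⟩
      · left
        constructor
        · rw [cancel, if_neg hza, if_neg hdz]
        · rw [cancel, if_neg hza, if_neg hdz]

lemma cancel_sw (hi : 0 < i) {w w' : List (GaussIGen n i)} (h : sw w w')
    (a : GaussIGen n i) :
    (cancel a w = none ∧ cancel a w' = none) ∨
      ∃ u u', cancel a w = some u ∧ cancel a w' = some u' ∧ sw u u' := by
  induction h with
  | refl =>
    cases hc : cancel a w with
    | none => exact Or.inl ⟨rfl, rfl⟩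
    | some u => exact Or.inr ⟨u, u, rfl, rfl, sw_refl _⟩
  | tail _ hstep ih =>
    rcases ih with ⟨h1, h2⟩ | ⟨u, u', h1, h2, h3⟩ <;>
      rcases cancel_swp hi hstep a with ⟨g1, g2⟩ | ⟨v, v', g1, g2, g3⟩
    · exact Or.inl ⟨h1, g2⟩
    · rw [h2] at g1; exact nomatch g1
    · rw [h2] at g1; exact nomatch g1
    · rw [h2] at g1
      obtain rfl : u' = v := by injection g1
      exact Or.inr ⟨u, v', h1, g2, sw_trans h3 g3⟩

lemma Red_swp (hi : 0 < i) {w w' : List (GaussIGen n i)} (h : Swp w w') (hw : Red w) :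
    Red w' := by
  obtain ⟨l₁, l₂, x, y, hxy⟩ := h
  induction l₁ with
  | nil =>
    simp only [List.nil_append] at hw ⊢
    have hyx : y ≠ x := dj_ne hi hxy.symm
    have hxyne : x ≠ y := dj_ne hi hxy
    obtain ⟨hc1, hc2, hred⟩ : cancel x (y :: l₂) = none ∧ cancel y l₂ = none ∧ Red l₂ :=
      ⟨hw.1, hw.2.1, hw.2.2⟩
    rw [cancel, if_neg hyx, if_pos hxy.symm] at hc1
    have hc1' : cancel x l₂ = none := Option.map_eq_none_iff.mp hc1
    refine ⟨?_, hc1', hred⟩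
    rw [cancel, if_neg hxyne, if_pos hxy, hc2]
    rfl
  | cons z l₁ ih =>
    simp only [List.cons_append] at hw ⊢
    refine ⟨?_, ih hw.2⟩
    rcases cancel_swp hi (Swp.mk l₁ l₂ x y hxy) z with ⟨h1, h2⟩ | ⟨u, u', h1, h2, h3⟩
    · exact h2
    · rw [hw.1] at h1
      exact nomatch h1

lemma Red_sw (hi : 0 < i) {w w' : List (GaussIGen n i)} (h : sw w w') (hw : Red w) :
    Red w' := by
  induction h with
  | refl => exact hw
  | tail _ hstep ih => exact Red_swp hi hstep ih

def act (a : GaussIGen n i) (w : List (GaussIGen n i)) : List (GaussIGen n i) :=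
  match cancel a w with
  | some u => u
  | none => a :: w

lemma act_of_none {a : GaussIGen n i} {w : List (GaussIGen n i)} (h : cancel a w = none) :
    act a w = a :: w := by
  unfold act; rw [h]

lemma act_of_some {a : GaussIGen n i} {w u : List (GaussIGen n i)} (h : cancel a w = some u) :
    act a w = u := by
  unfold act; rw [h]

lemma act_red {a : GaussIGen n i} {w : List (GaussIGen n i)} (hw : Red w) : Red (act a w) := by
  cases h : cancel a w with
  | none => rw [act_of_none h]; exact ⟨h, hw⟩
  | some u => rw [act_of_some h]; exact Red_cancel hw h

lemma act_sw (hi : 0 < i) {a : GaussIGen n i} {w w' : List (GaussIGen n i)} (h : sw w w') :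
    sw (act a w) (act a w') := by
  rcases cancel_sw hi h a with ⟨h1, h2⟩ | ⟨u, u', h1, h2, h3⟩
  · rw [act_of_none h1, act_of_none h2]
    exact sw_cons a h
  · rw [act_of_some h1, act_of_some h2]
    exact h3

lemma sw_middle {a : GaussIGen n i} : ∀ {l₁ : List (GaussIGen n i)}
    (_ : ∀ x ∈ l₁, Disjoint x.1 a.1) (l₂ : List (GaussIGen n i)),
    sw (a :: (l₁ ++ l₂)) (l₁ ++ a :: l₂)
  | [], _, l₂ => sw_refl _
  | x :: l₁, h, l₂ =>
    Relation.ReflTransGen.head (Swp.mk [] (l₁ ++ l₂) a x (h x (by simp)).symm)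
      (sw_cons x (sw_middle (fun y hy => h y (List.mem_cons_of_mem _ hy)) l₂))

lemma act_act {a : GaussIGen n i} {w : List (GaussIGen n i)} (hw : Red w) :
    sw (act a (act a w)) w := by
  cases h : cancel a w with
  | none =>
    rw [act_of_none h, act_of_some (show cancel a (a :: w) = some w by
      rw [cancel, if_pos rfl])]
    exact sw_refl _
  | some u =>
    rw [act_of_some h, act_of_none (cancel_cancel_none hw h)]
    obtain ⟨l₁, l₂, rfl, rfl, hl⟩ := cancel_decomp h
    exact sw_middle (fun x hx => (hl x hx).2) l₂

lemma act_comm_mixed (hi : 0 < i) {a b : GaussIGen n i} (hab : Disjoint a.1 b.1)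
    {w u : List (GaussIGen n i)} (ha : cancel a w = none) (hb : cancel b w = some u) :
    act a (act b w) = a :: u ∧ act b (act a w) = a :: u := by
  have hne : a ≠ b := dj_ne hi hab
  constructor
  · rw [act_of_some hb, act_of_none (cancel_none_of_del hab hb ha)]
  · rw [act_of_none ha, act_of_some (show cancel b (a :: w) = some (a :: u) by
      rw [cancel, if_neg hne, if_pos hab, hb]; rfl)]

lemma act_comm (hi : 0 < i) {a b : GaussIGen n i} (hab : Disjoint a.1 b.1)
    (w : List (GaussIGen n i)) : sw (act a (act b w)) (act b (act a w)) := by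
  have hne : a ≠ b := dj_ne hi hab
  cases ha : cancel a w with
  | none =>
    cases hb : cancel b w with
    | none =>
      rw [act_of_none hb, act_of_none ha,
        act_of_none (show cancel a (b :: w) = none by
          rw [cancel, if_neg (dj_ne hi hab.symm), if_pos hab.symm, ha]; rfl),
        act_of_none (show cancel b (a :: w) = none by
          rw [cancel, if_neg hne, if_pos hab, hb]; rfl)]
      exact Relation.ReflTransGen.single (Swp.mk [] w a b hab)
    | some u =>
      obtain ⟨e1, e2⟩ := act_comm_mixed hi hab ha hb
      rw [e1, e2]
      exact sw_refl _
  | some u =>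
    cases hb : cancel b w with
    | none =>
      obtain ⟨e1, e2⟩ := act_comm_mixed hi hab.symm hb ha
      rw [e1, e2]
      exact sw_refl _
    | some v =>
      obtain ⟨z, hz1, hz2⟩ := cancel_comm hne ha hb
      rw [act_of_some hb, act_of_some ha, act_of_some hz1, act_of_some hz2]
      exact sw_refl _

/-! ### The permutation action of `D_n^i` on reduced words -/

def RedList (n i : ℕ) := {l : List (GaussIGen n i) // Red l}

instance redSetoid (n i : ℕ) : Setoid (RedList n i) where
  r p q := sw p.1 q.1
  iseqv := ⟨fun _ => sw_refl _, sw_symm, sw_trans⟩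

def XQ (n i : ℕ) := Quotient (redSetoid n i)

def actsub (a : GaussIGen n i) (p : RedList n i) : RedList n i :=
  ⟨act a p.1, act_red p.2⟩

def actQ (hi : 0 < i) (a : GaussIGen n i) : XQ n i → XQ n i :=
  Quotient.map (actsub a) (fun _ _ h => act_sw hi h)

lemma actQ_mk (hi : 0 < i) (a : GaussIGen n i) (p : RedList n i) :
    actQ hi a ⟦p⟧ = ⟦actsub a p⟧ := rfl

lemma actQ_invol (hi : 0 < i) (a : GaussIGen n i) : Function.Involutive (actQ hi a) := by
  intro q
  induction q using Quotient.inductionOn with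
  | h p => exact Quotient.sound (act_act p.2)

def actP (hi : 0 < i) (a : GaussIGen n i) : Equiv.Perm (XQ n i) :=
  Function.Involutive.toPerm (actQ hi a) (actQ_invol hi a)

lemma actP_rels (hi : 0 < i) : ∀ r ∈ gaussIRels n i,
    FreeGroup.lift (actP (n := n) hi) r = 1 := by
  rintro r (⟨a, rfl⟩ | ⟨a, b, hab, rfl⟩)
  · simp only [map_mul, FreeGroup.lift_apply_of]
    ext q
    simp only [Equiv.Perm.mul_apply, Equiv.Perm.one_apply, actP,
      Function.Involutive.coe_toPerm]
    exact actQ_invol hi a q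
  · have hcomm : actP (n := n) hi a * actP hi b = actP hi b * actP hi a := by
      ext q
      induction q using Quotient.inductionOn with
      | h p =>
        simp only [Equiv.Perm.mul_apply, actP, Function.Involutive.coe_toPerm, actQ_mk]
        exact Quotient.sound (act_comm hi hab p.1)
    simp only [map_mul, map_inv, FreeGroup.lift_apply_of]
    rw [hcomm]
    group

def phiD (n : ℕ) {i : ℕ} (hi : 0 < i) : GaussIGroup n i →* Equiv.Perm (XQ n i) :=
  PresentedGroup.toGroup (actP_rels hi)

def mkDlist (L : List (GaussIGen n i)) : GaussIGroup n i :=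
  (L.map PresentedGroup.of).prod

def nf : List (GaussIGen n i) → RedList n i
  | [] => ⟨[], trivial⟩
  | a :: t => actsub a (nf t)

lemma phiD_apply (hi : 0 < i) (L : List (GaussIGen n i)) :
    phiD n hi (mkDlist L) ⟦(⟨[], trivial⟩ : RedList n i)⟧ = ⟦nf L⟧ := by
  induction L with
  | nil => simp [mkDlist, nf]; rfl
  | cons a t ih =>
    have : mkDlist (a :: t) = PresentedGroup.of a * mkDlist t := by
      simp [mkDlist]
    have hof : phiD n hi (PresentedGroup.of a) = actP hi a :=
      PresentedGroup.toGroup.of (actP_rels hi)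
    rw [this, map_mul]
    erw [Equiv.Perm.mul_apply]
    rw [ih, hof]
    rw [actP, Function.Involutive.coe_toPerm, actQ_mk]
    rfl

/-! ### Swap-or-delete reduction -/

inductive Rd : List (GaussIGen n i) → List (GaussIGen n i) → Prop
  | swap (l₁ l₂ : List (GaussIGen n i)) (a b : GaussIGen n i) (h : Disjoint a.1 b.1) :
      Rd (l₁ ++ a :: b :: l₂) (l₁ ++ b :: a :: l₂)
  | del (l₁ l₂ : List (GaussIGen n i)) (a : GaussIGen n i) :
      Rd (l₁ ++ a :: a :: l₂) (l₁ ++ l₂)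

def RdS : List (GaussIGen n i) → List (GaussIGen n i) → Prop := Relation.ReflTransGen Rd

lemma Rd.cons {t t' : List (GaussIGen n i)} (x : GaussIGen n i) (h : Rd t t') :
    Rd (x :: t) (x :: t') := by
  cases h with
  | swap l₁ l₂ a b h => exact Rd.swap (x :: l₁) l₂ a b h
  | del l₁ l₂ a => exact Rd.del (x :: l₁) l₂ a

lemma RdS_cons {t t' : List (GaussIGen n i)} (x : GaussIGen n i) (h : RdS t t') :
    RdS (x :: t) (x :: t') :=
  Relation.ReflTransGen.lift (r := Rd) (p := Rd) (x :: ·) (fun _ _ h => h.cons x) _ _ h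

lemma rd_middle {a : GaussIGen n i} : ∀ {l₁ : List (GaussIGen n i)}
    (_ : ∀ x ∈ l₁, Disjoint x.1 a.1) (l₂ : List (GaussIGen n i)),
    RdS (a :: (l₁ ++ a :: l₂)) (l₁ ++ l₂)
  | [], _, l₂ => Relation.ReflTransGen.single (Rd.del [] l₂ a)
  | x :: l₁, h, l₂ =>
    Relation.ReflTransGen.head (Rd.swap [] (l₁ ++ a :: l₂) a x (h x (by simp)).symm)
      (RdS_cons x (rd_middle (fun y hy => h y (List.mem_cons_of_mem _ hy)) l₂))

lemma rds_to_nf : ∀ L : List (GaussIGen n i), RdS L (nf L).1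
  | [] => Relation.ReflTransGen.refl
  | a :: t => by
    refine Relation.ReflTransGen.trans (RdS_cons a (rds_to_nf t)) ?_
    show RdS (a :: (nf t).1) (act a (nf t).1)
    cases h : cancel a (nf t).1 with
    | none =>
      rw [act_of_none h]
      exact Relation.ReflTransGen.refl
    | some u =>
      rw [act_of_some h]
      obtain ⟨l₁, l₂, he, rfl, hl⟩ := cancel_decomp h
      rw [he]
      exact rd_middle (fun x hx => (hl x hx).2) l₂
/-! ### Generic presented-group consequences -/

lemma cactusRel_one {C : Set (ℕ × ℕ)} {r : FreeGroup C} (h : r ∈ cactusRels C) :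
    PresentedGroup.mk (cactusRels C) r = 1 :=
  (QuotientGroup.eq_one_iff _).mpr (Subgroup.subset_normalClosure h)

lemma ofJ_sq {C : Set (ℕ × ℕ)} (a : C) :
    PresentedGroup.of (rels := cactusRels C) a * PresentedGroup.of a = 1 := by
  have h := cactusRel_one (C := C) (Or.inl ⟨a, rfl⟩)
  rw [map_mul] at h
  exact h

lemma ofJ_inv {C : Set (ℕ × ℕ)} (a : C) :
    (PresentedGroup.of (rels := cactusRels C) a)⁻¹ = PresentedGroup.of a :=
  inv_eq_of_mul_eq_one_right (ofJ_sq a)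

lemma ofJ_comm {C : Set (ℕ × ℕ)} {a b : C} (hd : a.1.2 < b.1.1 ∨ b.1.2 < a.1.1) :
    PresentedGroup.of (rels := cactusRels C) a * PresentedGroup.of b =
      PresentedGroup.of b * PresentedGroup.of a := by
  have h := cactusRel_one (C := C) (Or.inr (Or.inl ⟨a, b, hd, rfl⟩))
  rw [map_mul, map_mul, map_mul, map_inv, map_inv] at h
  refine commutatorElement_eq_one_iff_mul_comm.mp ?_
  rw [commutatorElement_def]
  exact h

lemma ofD_sq (a : GaussIGen n i) :
    PresentedGroup.of (rels := gaussIRels n i) a * PresentedGroup.of a = 1 := by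
  have h := gaussIRel_one (n := n) (i := i) (Or.inl ⟨a, rfl⟩)
  rw [map_mul] at h
  exact h

lemma ofD_inv (a : GaussIGen n i) :
    (PresentedGroup.of (rels := gaussIRels n i) a)⁻¹ = PresentedGroup.of a :=
  inv_eq_of_mul_eq_one_right (ofD_sq a)

lemma ofD_comm {a b : GaussIGen n i} (hd : Disjoint a.1 b.1) :
    PresentedGroup.of (rels := gaussIRels n i) a * PresentedGroup.of b =
      PresentedGroup.of b * PresentedGroup.of a := by
  have h := gaussIRel_one (n := n) (i := i) (Or.inr ⟨a, b, hd, rfl⟩)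
  rw [map_mul, map_mul, map_mul, map_inv, map_inv] at h
  refine commutatorElement_eq_one_iff_mul_comm.mp ?_
  rw [commutatorElement_def]
  exact h

lemma permGenI_mul (σ ρ : Equiv.Perm (Fin n)) (a : GaussIGen n i) :
    permGenI n i σ (permGenI n i ρ a) = permGenI n i (σ * ρ) a := by
  apply Subtype.ext
  simp only [permGenI, Finset.image_image]
  rfl

lemma permGenI_one (a : GaussIGen n i) : permGenI n i 1 a = a := by
  apply Subtype.ext
  simp [permGenI]

lemma permGenI_injective (σ : Equiv.Perm (Fin n)) :
    Function.Injective (permGenI n i σ) := by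
  intro a b h
  have := congrArg (permGenI n i σ⁻¹) h
  rwa [permGenI_mul, permGenI_mul, inv_mul_cancel, permGenI_one, permGenI_one] at this

lemma permAutI_of (σ : Equiv.Perm (Fin n)) (a : GaussIGen n i) :
    (permAutI n i σ) (PresentedGroup.of a) = PresentedGroup.of (permGenI n i σ a) :=
  permHomI_of n i σ a

lemma intervalFinsets_disjoint {p q m r : ℕ} (hd : q < m ∨ r < p) :
    Disjoint (intervalFinset n p q) (intervalFinset n m r) := by
  rw [Finset.disjoint_left]
  intro j hj1 hj2
  rw [mem_intervalFinset] at hj1 hj2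
  omega

/-! ### The word map from the slice cactus group -/

variable (n i) in
def igen (a : sliceSet n i i) : GaussIGen n i :=
  ⟨intervalFinset n a.1.1 a.1.2, by
    obtain ⟨⟨h1, h2, h3⟩, h4, h5⟩ := a.2
    rw [intervalFinset_card h1 h3]
    omega⟩

variable (n i) in
def wP (a : sliceSet n i i) : Equiv.Perm (Fin n) := wPerm n a.1.1 a.1.2

variable (n i) in
def Aword : Equiv.Perm (Fin n) → List (sliceSet n i i) → List (GaussIGen n i)
  | _, [] => []
  | σ, a :: t => permGenI n i σ (igen n i a) :: Aword (σ * wP n i a) t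

variable (n i) in
def prodJ (v : List (sliceSet n i i)) : SliceCactusGroup n i i :=
  (v.map PresentedGroup.of).prod

lemma Aword_map (σ ρ : Equiv.Perm (Fin n)) (t : List (sliceSet n i i)) :
    Aword n i (σ * ρ) t = (Aword n i ρ t).map (permGenI n i σ) := by
  induction t generalizing ρ with
  | nil => rfl
  | cons a t ih =>
    show permGenI n i (σ * ρ) (igen n i a) :: Aword n i (σ * ρ * wP n i a) t = _
    rw [mul_assoc, ih (ρ * wP n i a)]
    simp [Aword, permGenI_mul]

lemma mkDlist_map (σ : Equiv.Perm (Fin n)) (L : List (GaussIGen n i)) :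
    mkDlist (L.map (permGenI n i σ)) = permHomI n i σ (mkDlist L) := by
  induction L with
  | nil => simp [mkDlist]
  | cons a t ih =>
    simp only [mkDlist, List.map_cons, List.prod_cons] at *
    rw [map_mul, permHomI_of, ih]
/-! ### The homomorphism `ψ : J_n^{i,i} → D_n^i ⋊ S_n` -/

variable (n i) in
def psiGen (a : sliceSet n i i) :
    SemidirectProduct (GaussIGroup n i) (Equiv.Perm (Fin n)) (permAutI n i) :=
  ⟨PresentedGroup.of (igen n i a), wP n i a⟩

@[simp] lemma psiGen_left (a : sliceSet n i i) :
    (psiGen n i a).left = PresentedGroup.of (igen n i a) := rfl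

@[simp] lemma psiGen_right (a : sliceSet n i i) :
    (psiGen n i a).right = wP n i a := rfl

lemma slice_bounds (a : sliceSet n i i) :
    1 ≤ a.1.1 ∧ a.1.1 < a.1.2 ∧ a.1.2 ≤ n ∧ a.1.2 - a.1.1 + 1 = i := by
  obtain ⟨⟨h1, h2, h3⟩, h4, h5⟩ := a.2
  exact ⟨h1, h2, h3, by omega⟩

lemma permGenI_wP_self (a : sliceSet n i i) :
    permGenI n i (wP n i a) (igen n i a) = igen n i a := by
  obtain ⟨h1, h2, h3, h4⟩ := slice_bounds a
  exact Subtype.ext (image_wPerm_self a.1.1 a.1.2 h1 h3)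

lemma wP_sq (a : sliceSet n i i) : wP n i a * wP n i a = 1 := wPerm_sq n a.1.1 a.1.2

lemma psi_sq (a : sliceSet n i i) : psiGen n i a * psiGen n i a = 1 := by
  apply SemidirectProduct.ext
  · rw [SemidirectProduct.mul_left, psiGen_left, psiGen_right, permAutI_of,
      permGenI_wP_self, ofD_sq, SemidirectProduct.one_left]
  · rw [SemidirectProduct.mul_right, psiGen_right, wP_sq, SemidirectProduct.one_right]

lemma psi_inv (a : sliceSet n i i) : (psiGen n i a)⁻¹ = psiGen n i a :=
  inv_eq_of_mul_eq_one_right (psi_sq a)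

lemma permGenI_wP_disjoint {a b : sliceSet n i i} (hd : a.1.2 < b.1.1 ∨ b.1.2 < a.1.1) :
    permGenI n i (wP n i a) (igen n i b) = igen n i b :=
  Subtype.ext (image_wPerm_disjoint a.1.1 a.1.2 b.1.1 b.1.2 hd)

lemma igen_disjoint {a b : sliceSet n i i} (hd : a.1.2 < b.1.1 ∨ b.1.2 < a.1.1) :
    Disjoint (igen n i a).1 (igen n i b).1 := intervalFinsets_disjoint hd

lemma wP_comm {a b : sliceSet n i i} (hd : a.1.2 < b.1.1 ∨ b.1.2 < a.1.1) :
    wP n i a * wP n i b = wP n i b * wP n i a :=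
  wPerm_comm a.1.1 a.1.2 b.1.1 b.1.2 hd

lemma psi_comm {a b : sliceSet n i i} (hd : a.1.2 < b.1.1 ∨ b.1.2 < a.1.1) :
    psiGen n i a * psiGen n i b = psiGen n i b * psiGen n i a := by
  have hd' : b.1.2 < a.1.1 ∨ a.1.2 < b.1.1 := hd.symm
  apply SemidirectProduct.ext
  · rw [SemidirectProduct.mul_left, SemidirectProduct.mul_left, psiGen_left, psiGen_left,
      psiGen_right, psiGen_right, permAutI_of, permAutI_of, permGenI_wP_disjoint hd,
      permGenI_wP_disjoint hd', ofD_comm (igen_disjoint hd)]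
  · rw [SemidirectProduct.mul_right, SemidirectProduct.mul_right, psiGen_right, psiGen_right]
    exact wP_comm hd

lemma slice_nested_eq {a b : sliceSet n i i} (h1 : a.1.1 ≤ b.1.1) (h2 : b.1.2 ≤ a.1.2) :
    b = a := by
  obtain ⟨a1, a2, a3, a4⟩ := slice_bounds a
  obtain ⟨b1, b2, b3, b4⟩ := slice_bounds b
  apply Subtype.ext
  apply Prod.ext <;> omega

lemma psi_rels : ∀ r ∈ cactusRels (sliceSet n i i),
    FreeGroup.lift (psiGen n i) r = 1 := by
  rintro r (⟨a, rfl⟩ | ⟨a, b, hd, rfl⟩ | ⟨a, b, c, hn1, hn2, hc1, hc2, rfl⟩)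
  · rw [map_mul, FreeGroup.lift_apply_of, psi_sq]
  · simp only [map_mul, map_inv, FreeGroup.lift_apply_of]
    rw [psi_comm hd]
    group
  · have hba : b = a := slice_nested_eq hn1 hn2
    subst hba
    have hca : c = b := by
      obtain ⟨a1, a2, a3, a4⟩ := slice_bounds b
      obtain ⟨c1, c2, c3, c4⟩ := slice_bounds c
      apply Subtype.ext
      apply Prod.ext <;> omega
    subst hca
    simp only [map_mul, map_inv, FreeGroup.lift_apply_of]
    group

variable (n i) in
def psiH : SliceCactusGroup n i i →*
    SemidirectProduct (GaussIGroup n i) (Equiv.Perm (Fin n)) (permAutI n i) :=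
  PresentedGroup.toGroup psi_rels

lemma psiH_prodJ (v : List (sliceSet n i i)) :
    psiH n i (prodJ n i v) =
      ⟨mkDlist (Aword n i 1 v), (v.map (wP n i)).prod⟩ := by
  induction v with
  | nil =>
    show psiH n i 1 = _
    rw [map_one]
    apply SemidirectProduct.ext <;> simp [mkDlist, Aword]
  | cons a t ih =>
    have hstep : prodJ n i (a :: t) = PresentedGroup.of a * prodJ n i t := by
      simp [prodJ]
    rw [hstep, map_mul, ih]
    have hof : psiH n i (PresentedGroup.of a) = psiGen n i a :=
      PresentedGroup.toGroup.of psi_rels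
    rw [hof]
    apply SemidirectProduct.ext
    · rw [SemidirectProduct.mul_left]
      show PresentedGroup.of (igen n i a) * (permAutI n i (wP n i a)) (mkDlist (Aword n i 1 t)) =
        mkDlist (Aword n i 1 (a :: t))
      show _ * permHomI n i (wP n i a) (mkDlist (Aword n i 1 t)) = _
      rw [← mkDlist_map, ← Aword_map, mul_one]
      show _ = mkDlist (permGenI n i 1 (igen n i a) :: Aword n i (1 * wP n i a) t)
      rw [permGenI_one, one_mul]
      simp [mkDlist]
    · rw [SemidirectProduct.mul_right]
      simp

/-! ### Transfer of reductions back to the cactus group -/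

lemma mem_igen_stable {a : sliceSet n i i} {j : Fin n} (hj : j ∈ (igen n i a).1) :
    wP n i a j ∈ (igen n i a).1 := by
  obtain ⟨h1, h2, h3, h4⟩ := slice_bounds a
  show wP n i a j ∈ intervalFinset n a.1.1 a.1.2
  rw [← image_wPerm_self a.1.1 a.1.2 h1 h3]
  exact Finset.mem_image_of_mem _ hj

lemma disjoint_wP_image {a b : sliceSet n i i}
    (hd : Disjoint (igen n i a).1 ((igen n i b).1.image (wP n i a))) :
    a.1.2 < b.1.1 ∨ b.1.2 < a.1.1 := by
  obtain ⟨a1, a2, a3, a4⟩ := slice_bounds a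
  obtain ⟨b1, b2, b3, b4⟩ := slice_bounds b
  by_contra hc
  push_neg at hc
  set j : Fin n := ⟨max a.1.1 b.1.1 - 1, by omega⟩ with hjdef
  have hja : j ∈ (igen n i a).1 := by
    show j ∈ intervalFinset n a.1.1 a.1.2
    rw [mem_intervalFinset]
    simp [hjdef]
    omega
  have hjb : j ∈ (igen n i b).1 := by
    show j ∈ intervalFinset n b.1.1 b.1.2
    rw [mem_intervalFinset]
    simp [hjdef]
    omega
  exact (Finset.disjoint_left.mp hd (mem_igen_stable hja))
    (Finset.mem_image_of_mem _ hjb)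

lemma transfer_swap :
    ∀ (l₁ : List (GaussIGen n i)) (v : List (sliceSet n i i)) (σ : Equiv.Perm (Fin n))
      (l₂ : List (GaussIGen n i)) (x y : GaussIGen n i),
      Aword n i σ v = l₁ ++ x :: y :: l₂ → Disjoint x.1 y.1 →
      ∃ v', Aword n i σ v' = l₁ ++ y :: x :: l₂ ∧ prodJ n i v' = prodJ n i v
  | [], [], σ, l₂, x, y => by intro h; exact absurd h (by simp [Aword])
  | [], a :: t, σ, l₂, x, y => by
    intro h hd
    rw [Aword] at h
    obtain ⟨hx, h2⟩ := List.cons.injEq _ _ _ _ ▸ h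
    match t, h2 with
    | b :: t', h2 =>
      rw [Aword] at h2
      obtain ⟨hy, h3⟩ := List.cons.injEq _ _ _ _ ▸ h2
      -- derive interval-level disjointness
      have hd2 : Disjoint (igen n i a).1 ((igen n i b).1.image (wP n i a)) := by
        have : y.1 = ((igen n i b).1.image (wP n i a)).image σ := by
          rw [← hy]
          show (permGenI n i (σ * wP n i a) (igen n i b)).1 = _
          rw [← permGenI_mul]
          rfl
        have hx1 : x.1 = (igen n i a).1.image σ := by rw [← hx]; rfl
        rw [hx1, this] at hd
        exact (Finset.disjoint_image σ.injective).mp hd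
      have hint : a.1.2 < b.1.1 ∨ b.1.2 < a.1.1 := disjoint_wP_image hd2
      refine ⟨b :: a :: t', ?_, ?_⟩
      · rw [Aword, Aword]
        have e1 : permGenI n i σ (igen n i b) = y := by
          rw [← hy, ← permGenI_mul, permGenI_wP_disjoint hint]
        have e2 : permGenI n i (σ * wP n i b) (igen n i a) = x := by
          rw [← hx, ← permGenI_mul]
          congr 1
          exact permGenI_wP_disjoint (hint.symm)
        have e3 : σ * wP n i b * wP n i a = σ * wP n i a * wP n i b := by
          rw [mul_assoc, mul_assoc, ← wP_comm hint]
        rw [e1, e2, e3, h3]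
        simp
      · show (List.map PresentedGroup.of (b :: a :: t')).prod = _
        simp only [prodJ, List.map_cons, List.prod_cons]
        rw [← mul_assoc, ← mul_assoc, ofJ_comm (C := sliceSet n i i) hint.symm]
  | z :: l₁, [], σ, l₂, x, y => by intro h; exact absurd h (by simp [Aword])
  | z :: l₁, a :: t, σ, l₂, x, y => by
    intro h hd
    rw [Aword] at h
    obtain ⟨hz, h2⟩ := List.cons.injEq _ _ _ _ ▸ h
    obtain ⟨t', ht1, ht2⟩ := transfer_swap l₁ t (σ * wP n i a) l₂ x y h2 hd
    refine ⟨a :: t', ?_, ?_⟩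
    · rw [Aword, hz, ht1]
      simp
    · simp only [prodJ, List.map_cons, List.prod_cons] at *
      rw [ht2]

lemma image_image_wP (a : sliceSet n i i) (s : Finset (Fin n)) :
    (s.image (wP n i a)).image (wP n i a) = s := by
  rw [Finset.image_image]
  have : (wP n i a) ∘ (wP n i a) = id := by
    funext j
    exact wFun_involutive n a.1.1 a.1.2 j
  rw [this, Finset.image_id]

lemma transfer_del :
    ∀ (l₁ : List (GaussIGen n i)) (v : List (sliceSet n i i)) (σ : Equiv.Perm (Fin n))
      (l₂ : List (GaussIGen n i)) (x : GaussIGen n i),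
      Aword n i σ v = l₁ ++ x :: x :: l₂ →
      ∃ v', Aword n i σ v' = l₁ ++ l₂ ∧ prodJ n i v' = prodJ n i v
  | [], [], σ, l₂, x => by intro h; exact absurd h (by simp [Aword])
  | [], a :: t, σ, l₂, x => by
    intro h
    rw [Aword] at h
    obtain ⟨hx, h2⟩ := List.cons.injEq _ _ _ _ ▸ h
    match t, h2 with
    | b :: t', h2 =>
      rw [Aword] at h2
      obtain ⟨hy, h3⟩ := List.cons.injEq _ _ _ _ ▸ h2
      have heq : permGenI n i σ (igen n i a) =
          permGenI n i σ (permGenI n i (wP n i a) (igen n i b)) := by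
        rw [hx, permGenI_mul, ← hy]
      have heq2 : (igen n i a).1 = (igen n i b).1.image (wP n i a) :=
        congrArg Subtype.val (permGenI_injective σ heq)
      have heq3 : (igen n i b).1 = (igen n i a).1 := by
        have h5 := congrArg (fun s => Finset.image (wP n i a) s) heq2
        beta_reduce at h5
        rw [image_image_wP] at h5
        obtain ⟨a1, a2, a3, a4⟩ := slice_bounds a
        rw [← h5]
        exact image_wPerm_self a.1.1 a.1.2 a1 a3
      have hba : b = a := by
        obtain ⟨a1, a2, a3, a4⟩ := slice_bounds a
        obtain ⟨b1, b2, b3, b4⟩ := slice_bounds b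
        have := intervalFinset_inj b1 b2 b3 a1 a2 a3 heq3
        apply Subtype.ext
        apply Prod.ext <;> omega
      subst hba
      refine ⟨t', ?_, ?_⟩
      · rw [← h3]
        congr 1
        rw [mul_assoc, wP_sq b, mul_one]
      · show prodJ n i t' = (List.map PresentedGroup.of (b :: b :: t')).prod
        simp only [List.map_cons, List.prod_cons]
        rw [← mul_assoc, ofJ_sq, one_mul]
        rfl
  | z :: l₁, [], σ, l₂, x => by intro h; exact absurd h (by simp [Aword])
  | z :: l₁, a :: t, σ, l₂, x => by
    intro h
    rw [Aword] at h
    obtain ⟨hz, h2⟩ := List.cons.injEq _ _ _ _ ▸ h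
    obtain ⟨t', ht1, ht2⟩ := transfer_del l₁ t (σ * wP n i a) l₂ x h2
    refine ⟨a :: t', ?_, ?_⟩
    · rw [Aword, hz, ht1]
      simp
    · simp only [prodJ, List.map_cons, List.prod_cons] at *
      rw [ht2]

lemma transfer_rd {v : List (sliceSet n i i)} {σ : Equiv.Perm (Fin n)}
    {L' : List (GaussIGen n i)} (h : Rd (Aword n i σ v) L') :
    ∃ v', Aword n i σ v' = L' ∧ prodJ n i v' = prodJ n i v := by
  generalize hL : Aword n i σ v = L at h
  cases h with
  | swap l₁ l₂ a b hd => exact transfer_swap l₁ v σ l₂ a b hL hd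
  | del l₁ l₂ a => exact transfer_del l₁ v σ l₂ a hL

lemma transfer_rds {v : List (sliceSet n i i)} {σ : Equiv.Perm (Fin n)}
    {L' : List (GaussIGen n i)} (h : RdS (Aword n i σ v) L') :
    ∃ v', Aword n i σ v' = L' ∧ prodJ n i v' = prodJ n i v := by
  generalize hL : Aword n i σ v = L at h
  induction h generalizing v with
  | refl => exact ⟨v, hL, rfl⟩
  | tail hab hstep ih =>
    obtain ⟨v₁, hv1, hv2⟩ := ih hL
    obtain ⟨v', hv1', hv2'⟩ := transfer_rd (hv1 ▸ hstep)
    exact ⟨v', hv1', hv2'.trans hv2⟩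

lemma exists_prodJ (g : SliceCactusGroup n i i) : ∃ v : List (sliceSet n i i), prodJ n i v = g := by
  refine QuotientGroup.induction_on g (fun z => ?_)
  refine FreeGroup.induction_on (C := fun z => ∃ v, prodJ n i v = QuotientGroup.mk z) z
    ⟨[], rfl⟩ (fun x => ⟨[x], by simp [prodJ]; rfl⟩) (fun x _ => ⟨[x], ?_⟩) ?_
  · have h1 : prodJ n i [x] = PresentedGroup.of x := by simp [prodJ]
    rw [h1, ← ofJ_inv]
    rfl
  · rintro x y ⟨v, hv⟩ ⟨u, hu⟩
    refine ⟨v ++ u, ?_⟩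
    have : (QuotientGroup.mk (x * y) : SliceCactusGroup n i i) =
        QuotientGroup.mk x * QuotientGroup.mk y := rfl
    rw [this, ← hv, ← hu]
    simp [prodJ]
    rfl

lemma Aword_nil_iff {σ : Equiv.Perm (Fin n)} {v : List (sliceSet n i i)}
    (h : Aword n i σ v = []) : v = [] := by
  cases v with
  | nil => rfl
  | cons a t => exact absurd h (by simp [Aword])

lemma psiH_injective (h2 : 2 ≤ i) : Function.Injective (psiH n i) := by
  rw [injective_iff_map_eq_one]
  intro g hg
  obtain ⟨v, rfl⟩ := exists_prodJ g
  rw [psiH_prodJ] at hg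
  have hi : 0 < i := by omega
  have hL : mkDlist (Aword n i 1 v) = 1 := by
    have := congrArg SemidirectProduct.left hg
    simpa using this
  have hrd : RdS (Aword n i 1 v) [] := by
    have h1 : phiD n hi (mkDlist (Aword n i 1 v)) ⟦(⟨[], trivial⟩ : RedList n i)⟧ =
        ⟦(⟨[], trivial⟩ : RedList n i)⟧ := by rw [hL, map_one]; rfl
    rw [phiD_apply hi] at h1
    have h2' : sw (nf (Aword n i 1 v)).1 [] := Quotient.exact h1
    have h3 : (nf (Aword n i 1 v)).1 = [] := sw_nil h2'
    have h4 := rds_to_nf (Aword n i 1 v)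
    rwa [h3] at h4
  obtain ⟨v', hv1, hv2⟩ := transfer_rds hrd
  rw [Aword_nil_iff hv1] at hv2
  rw [← hv2]
  rfl
/-! ### The eraser homomorphism `ε_i : J_n → D_n^i ⋊ S_n` -/

variable (n i) in
def tauGen (a : cactusSet n) (h : a.1.2 - a.1.1 + 1 = i) : GaussIGen n i :=
  ⟨intervalFinset n a.1.1 a.1.2, by
    have hlt := a.2.2.1
    rw [intervalFinset_card a.2.1 a.2.2.2]
    omega⟩

variable (n i) in
def epsGen (a : cactusSet n) :
    SemidirectProduct (GaussIGroup n i) (Equiv.Perm (Fin n)) (permAutI n i) :=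
  if a.1.2 - a.1.1 + 1 < i then 1
  else if h' : a.1.2 - a.1.1 + 1 = i then
    ⟨PresentedGroup.of (tauGen n i a h'), wPerm n a.1.1 a.1.2⟩
  else ⟨1, wPerm n a.1.1 a.1.2⟩

lemma epsGen_lt {a : cactusSet n} (h : a.1.2 - a.1.1 + 1 < i) : epsGen n i a = 1 := by
  rw [epsGen, if_pos h]

lemma epsGen_eq {a : cactusSet n} (h : a.1.2 - a.1.1 + 1 = i) :
    epsGen n i a = ⟨PresentedGroup.of (tauGen n i a h), wPerm n a.1.1 a.1.2⟩ := by
  rw [epsGen, if_neg (by omega), dif_pos h]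

lemma epsGen_gt {a : cactusSet n} (h : i < a.1.2 - a.1.1 + 1) :
    epsGen n i a = ⟨1, wPerm n a.1.1 a.1.2⟩ := by
  rw [epsGen, if_neg (by omega), dif_neg (by omega)]

lemma cactus_bounds (a : cactusSet n) : 1 ≤ a.1.1 ∧ a.1.1 < a.1.2 ∧ a.1.2 ≤ n := a.2

lemma permGenI_tau_self {a : cactusSet n} (h : a.1.2 - a.1.1 + 1 = i) :
    permGenI n i (wPerm n a.1.1 a.1.2) (tauGen n i a h) = tauGen n i a h := by
  obtain ⟨h1, h2, h3⟩ := cactus_bounds a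
  exact Subtype.ext (image_wPerm_self a.1.1 a.1.2 h1 h3)

lemma epsGen_sq (a : cactusSet n) : epsGen n i a * epsGen n i a = 1 := by
  rcases lt_trichotomy (a.1.2 - a.1.1 + 1) i with h | h | h
  · rw [epsGen_lt h, one_mul]
  · rw [epsGen_eq h]
    apply SemidirectProduct.ext
    · rw [SemidirectProduct.mul_left]
      show PresentedGroup.of (tauGen n i a h) *
        (permAutI n i (wPerm n a.1.1 a.1.2)) (PresentedGroup.of (tauGen n i a h)) = _
      rw [permAutI_of, permGenI_tau_self h, ofD_sq, SemidirectProduct.one_left]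
    · rw [SemidirectProduct.mul_right]
      show wPerm n a.1.1 a.1.2 * wPerm n a.1.1 a.1.2 = _
      rw [wPerm_sq, SemidirectProduct.one_right]
  · rw [epsGen_gt h]
    apply SemidirectProduct.ext
    · rw [SemidirectProduct.mul_left]
      show (1 : GaussIGroup n i) * (permAutI n i (wPerm n a.1.1 a.1.2)) 1 = _
      rw [map_one, mul_one, SemidirectProduct.one_left]
    · rw [SemidirectProduct.mul_right]
      show wPerm n a.1.1 a.1.2 * wPerm n a.1.1 a.1.2 = _
      rw [wPerm_sq, SemidirectProduct.one_right]

lemma epsGen_inv (a : cactusSet n) : (epsGen n i a)⁻¹ = epsGen n i a :=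
  inv_eq_of_mul_eq_one_right (epsGen_sq a)

lemma permGenI_tau_disjoint {a b : cactusSet n} (h : b.1.2 - b.1.1 + 1 = i)
    (hd : a.1.2 < b.1.1 ∨ b.1.2 < a.1.1) :
    permGenI n i (wPerm n a.1.1 a.1.2) (tauGen n i b h) = tauGen n i b h :=
  Subtype.ext (image_wPerm_disjoint a.1.1 a.1.2 b.1.1 b.1.2 hd)

lemma epsGen_comm {a b : cactusSet n} (hd : a.1.2 < b.1.1 ∨ b.1.2 < a.1.1) :
    epsGen n i a * epsGen n i b = epsGen n i b * epsGen n i a := by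
  rcases lt_trichotomy (a.1.2 - a.1.1 + 1) i with ha | ha | ha
  · rw [epsGen_lt ha, one_mul, mul_one]
  all_goals rcases lt_trichotomy (b.1.2 - b.1.1 + 1) i with hb | hb | hb
  any_goals rw [epsGen_lt hb, one_mul, mul_one]
  · -- eq, eq
    rw [epsGen_eq ha, epsGen_eq hb]
    apply SemidirectProduct.ext
    · rw [SemidirectProduct.mul_left, SemidirectProduct.mul_left]
      show PresentedGroup.of (tauGen n i a ha) *
          (permAutI n i (wPerm n a.1.1 a.1.2)) (PresentedGroup.of (tauGen n i b hb)) =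
        PresentedGroup.of (tauGen n i b hb) *
          (permAutI n i (wPerm n b.1.1 b.1.2)) (PresentedGroup.of (tauGen n i a ha))
      rw [permAutI_of, permAutI_of, permGenI_tau_disjoint hb hd,
        permGenI_tau_disjoint ha hd.symm, ofD_comm (intervalFinsets_disjoint hd)]
    · rw [SemidirectProduct.mul_right, SemidirectProduct.mul_right]
      exact wPerm_comm a.1.1 a.1.2 b.1.1 b.1.2 hd
  · -- eq, gt
    rw [epsGen_eq ha, epsGen_gt hb]
    apply SemidirectProduct.ext
    · rw [SemidirectProduct.mul_left, SemidirectProduct.mul_left]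
      show PresentedGroup.of (tauGen n i a ha) *
          (permAutI n i (wPerm n a.1.1 a.1.2)) 1 =
        (1 : GaussIGroup n i) *
          (permAutI n i (wPerm n b.1.1 b.1.2)) (PresentedGroup.of (tauGen n i a ha))
      rw [map_one, mul_one, one_mul, permAutI_of, permGenI_tau_disjoint ha hd.symm]
    · rw [SemidirectProduct.mul_right, SemidirectProduct.mul_right]
      exact wPerm_comm a.1.1 a.1.2 b.1.1 b.1.2 hd
  · -- gt, eq
    rw [epsGen_gt ha, epsGen_eq hb]
    apply SemidirectProduct.ext
    · rw [SemidirectProduct.mul_left, SemidirectProduct.mul_left]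
      show (1 : GaussIGroup n i) *
          (permAutI n i (wPerm n a.1.1 a.1.2)) (PresentedGroup.of (tauGen n i b hb)) =
        PresentedGroup.of (tauGen n i b hb) *
          (permAutI n i (wPerm n b.1.1 b.1.2)) 1
      rw [map_one, mul_one, one_mul, permAutI_of, permGenI_tau_disjoint hb hd]
    · rw [SemidirectProduct.mul_right, SemidirectProduct.mul_right]
      exact wPerm_comm a.1.1 a.1.2 b.1.1 b.1.2 hd
  · -- gt, gt
    rw [epsGen_gt ha, epsGen_gt hb]
    apply SemidirectProduct.ext
    · rw [SemidirectProduct.mul_left, SemidirectProduct.mul_left]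
      show (1 : GaussIGroup n i) * (permAutI n i (wPerm n a.1.1 a.1.2)) 1 =
        (1 : GaussIGroup n i) * (permAutI n i (wPerm n b.1.1 b.1.2)) 1
      rw [map_one, map_one]
    · rw [SemidirectProduct.mul_right, SemidirectProduct.mul_right]
      exact wPerm_comm a.1.1 a.1.2 b.1.1 b.1.2 hd

lemma epsGen_conj {a b c : cactusSet n} (hn1 : a.1.1 ≤ b.1.1) (hn2 : b.1.2 ≤ a.1.2)
    (hc1 : c.1.1 = a.1.1 + a.1.2 - b.1.2) (hc2 : c.1.2 = a.1.1 + a.1.2 - b.1.1) :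
    epsGen n i a * epsGen n i b * epsGen n i a = epsGen n i c := by
  obtain ⟨a1, a2, a3⟩ := cactus_bounds a
  obtain ⟨b1, b2, b3⟩ := cactus_bounds b
  obtain ⟨c1, c2, c3⟩ := cactus_bounds c
  have hwc : c.1.2 - c.1.1 + 1 = b.1.2 - b.1.1 + 1 := by omega
  have hwba : b.1.2 - b.1.1 + 1 ≤ a.1.2 - a.1.1 + 1 := by omega
  have hconj : wPerm n a.1.1 a.1.2 * wPerm n b.1.1 b.1.2 * wPerm n a.1.1 a.1.2 =
      wPerm n c.1.1 c.1.2 := by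
    rw [hc1, hc2]
    exact wPerm_conj a.1.1 a.1.2 b.1.1 b.1.2 a1 hn1 b2 hn2 a3
  rcases lt_trichotomy (a.1.2 - a.1.1 + 1) i with ha | ha | ha
  · rw [epsGen_lt ha, epsGen_lt (by omega), epsGen_lt (by omega : c.1.2 - c.1.1 + 1 < i),
      one_mul, one_mul]
  · rcases lt_trichotomy (b.1.2 - b.1.1 + 1) i with hb | hb | hb
    · rw [epsGen_lt hb, epsGen_lt (by omega : c.1.2 - c.1.1 + 1 < i), mul_one, epsGen_sq]
    · -- widths equal: b = a and c = a
      have hba : b = a := by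
        apply Subtype.ext
        apply Prod.ext <;> omega
      subst hba
      have hca : c = b := by
        apply Subtype.ext
        apply Prod.ext <;> omega
      subst hca
      rw [epsGen_sq, one_mul]
    · omega
  · rcases lt_trichotomy (b.1.2 - b.1.1 + 1) i with hb | hb | hb
    · rw [epsGen_lt hb, epsGen_lt (by omega : c.1.2 - c.1.1 + 1 < i), mul_one, epsGen_sq]
    · -- a wide, b exactly i
      have htau : permGenI n i (wPerm n a.1.1 a.1.2) (tauGen n i b hb) =
          tauGen n i c (by omega) := by
        apply Subtype.ext
        show (intervalFinset n b.1.1 b.1.2).image (wPerm n a.1.1 a.1.2) = _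
        rw [image_wPerm_nested a.1.1 a.1.2 b.1.1 b.1.2 a1 hn1 (by omega) hn2 a3, ← hc1, ← hc2]
        rfl
      rw [epsGen_gt ha, epsGen_eq hb, epsGen_eq (by omega : c.1.2 - c.1.1 + 1 = i)]
      apply SemidirectProduct.ext
      · rw [SemidirectProduct.mul_left, SemidirectProduct.mul_left]
        show (1 : GaussIGroup n i) * (permAutI n i (wPerm n a.1.1 a.1.2))
              (PresentedGroup.of (tauGen n i b hb)) *
            (permAutI n i (wPerm n a.1.1 a.1.2 * wPerm n b.1.1 b.1.2)) 1 =
          PresentedGroup.of (tauGen n i c (by omega))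
        rw [map_one, mul_one, one_mul, permAutI_of, htau]
      · rw [SemidirectProduct.mul_right, SemidirectProduct.mul_right]
        exact hconj
    · -- both wide
      rw [epsGen_gt ha, epsGen_gt hb, epsGen_gt (by omega : i < c.1.2 - c.1.1 + 1)]
      apply SemidirectProduct.ext
      · rw [SemidirectProduct.mul_left, SemidirectProduct.mul_left]
        show (1 : GaussIGroup n i) * (permAutI n i (wPerm n a.1.1 a.1.2)) 1 *
            (permAutI n i (wPerm n a.1.1 a.1.2 * wPerm n b.1.1 b.1.2)) 1 = (1 : GaussIGroup n i)
        rw [map_one, map_one, mul_one, mul_one]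
      · rw [SemidirectProduct.mul_right, SemidirectProduct.mul_right]
        exact hconj

lemma eps_rels : ∀ r ∈ cactusRels (cactusSet n),
    FreeGroup.lift (epsGen n i) r = 1 := by
  rintro r (⟨a, rfl⟩ | ⟨a, b, hd, rfl⟩ | ⟨a, b, c, hn1, hn2, hc1, hc2, rfl⟩)
  · rw [map_mul, FreeGroup.lift_apply_of, epsGen_sq]
  · simp only [map_mul, map_inv, FreeGroup.lift_apply_of]
    rw [epsGen_comm hd]
    group
  · simp only [map_mul, map_inv, FreeGroup.lift_apply_of]
    rw [epsGen_inv, epsGen_inv, epsGen_conj hn1 hn2 hc1 hc2, epsGen_sq]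

variable (n i) in
def epsH : CactusGroup n →*
    SemidirectProduct (GaussIGroup n i) (Equiv.Perm (Fin n)) (permAutI n i) :=
  PresentedGroup.toGroup eps_rels
end Eraser

/-- For every `2 ≤ i ≤ n`: (a) there is a well-defined eraser homomorphism
`ε_i : J_n → D_n^i ⋊ S_n` sending `s_{p,q}` to `(1,1)`, `(τ_{[p,q]}, w_{p,q})` or
`(1, w_{p,q})` according as `q-p+1 < i`, `= i` or `> i`; (b) the homomorphism
`J_n^{i,i} → D_n^i ⋊ S_n`, `s_{p,q} ↦ (τ_{[p,q]}, w_{p,q})`, is injective. -/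
theorem eraser_cocycle (n i : ℕ) (h2 : 2 ≤ i) (hin : i ≤ n) :
    (∃ ε : CactusGroup n →*
        SemidirectProduct (GaussIGroup n i) (Equiv.Perm (Fin n)) (permAutI n i),
      ∀ (p q : ℕ) (h : (p, q) ∈ cactusSet n),
        ε (PresentedGroup.of ⟨(p, q), h⟩) =
          if q - p + 1 < i then 1
          else if h' : q - p + 1 = i then
            ⟨PresentedGroup.of ⟨intervalFinset n p q, by
              have hlt := h.2.1
              rw [intervalFinset_card h.1 h.2.2]
              omega⟩, wPerm n p q⟩
          else ⟨1, wPerm n p q⟩) ∧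
    (∃ ψ : SliceCactusGroup n i i →*
        SemidirectProduct (GaussIGroup n i) (Equiv.Perm (Fin n)) (permAutI n i),
      (∀ (p q : ℕ) (h : (p, q) ∈ sliceSet n i i),
        ψ (PresentedGroup.of ⟨(p, q), h⟩) =
          ⟨PresentedGroup.of ⟨intervalFinset n p q, by
            have hlt := h.1.2.1
            have hle := h.2.1
            have hge := h.2.2
            rw [intervalFinset_card h.1.1 h.1.2.2]
            omega⟩, wPerm n p q⟩) ∧
      Function.Injective ψ) := by
  constructor
  · refine ⟨Eraser.epsH n i, fun p q h => ?_⟩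
    rw [show (Eraser.epsH n i) (PresentedGroup.of ⟨(p, q), h⟩) =
        Eraser.epsGen n i ⟨(p, q), h⟩ from PresentedGroup.toGroup.of _]
    rfl
  · exact ⟨Eraser.psiH n i, fun p q h =>
      (show (Eraser.psiH n i) (PresentedGroup.of ⟨(p, q), h⟩) =
        Eraser.psiGen n i ⟨(p, q), h⟩ from PresentedGroup.toGroup.of _),
      Eraser.psiH_injective h2⟩
end

section
/- For every integer n ≥ 2, the image under ρ : J_n → D_n ⋊ S_n of the pure cactus group PJ_n is contained in the subgroup D_n × {1}, and the induced map PJ_n → D_n (taking the first coordinate of ρ) is an injective group homomorphism; that is, PJ_n embeds into the right-angled Coxeter group D_n. -/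
set_option linter.unusedSectionVars false

namespace Racg

variable {S : Type*} (E : S → S → Prop)

/-- `HasVis a w`: there is an occurrence of `a` in `w` such that every letter before it
commutes with `a`. -/
def HasVis (a : S) : List S → Prop
  | [] => False
  | b :: t => b = a ∨ (E b a ∧ HasVis a t)

/-- Reduced words: no letter has a visible partner later on. -/
def Red : List S → Prop
  | [] => True
  | b :: t => ¬ HasVis E b t ∧ Red t

/-- The rewriting moves: swap adjacent commuting letters, delete adjacent equal letters. -/
inductive Step : List S → List S → Prop
  | swap (a b : S) (t : List S) : E a b → Step (a :: b :: t) (b :: a :: t)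
  | del (a : S) (t : List S) : Step (a :: a :: t) t
  | cons (a : S) {t t' : List S} : Step t t' → Step (a :: t) (a :: t')

/-- A single swap of adjacent commuting letters. -/
inductive Sw : List S → List S → Prop
  | swap (a b : S) (t : List S) : E a b → Sw (a :: b :: t) (b :: a :: t)
  | cons (a : S) {t t' : List S} : Sw t t' → Sw (a :: t) (a :: t')

/-- Swap-equivalence. -/
def SwEq (w w' : List S) : Prop := Relation.ReflTransGen (Sw E) w w'

variable {E}

lemma Sw.symm (hE : Symmetric E) : ∀ {w w'}, Sw E w w' → Sw E w' w := by
  intro w w' h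
  induction h with
  | swap a b t hab => exact Sw.swap b a t (hE hab)
  | cons a _ ih => exact Sw.cons a ih

lemma SwEq.refl (w : List S) : SwEq E w w := Relation.ReflTransGen.refl

lemma SwEq.trans {w₁ w₂ w₃ : List S} (h : SwEq E w₁ w₂) (h' : SwEq E w₂ w₃) :
    SwEq E w₁ w₃ := Relation.ReflTransGen.trans h h'

lemma SwEq.symm (hE : Symmetric E) {w w' : List S} (h : SwEq E w w') : SwEq E w' w := by
  induction h with
  | refl => exact SwEq.refl _
  | tail _ h ih => exact SwEq.trans (Relation.ReflTransGen.single (Sw.symm hE h)) ih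

lemma SwEq.cons (a : S) {w w' : List S} (h : SwEq E w w') : SwEq E (a :: w) (a :: w') := by
  induction h with
  | refl => exact SwEq.refl _
  | tail _ h ih => exact SwEq.trans ih (Relation.ReflTransGen.single (Sw.cons a h))

lemma Sw.length_eq {w w' : List S} (h : Sw E w w') : w.length = w'.length := by
  induction h with
  | swap a b t hab => rfl
  | cons a _ ih => simp [ih]

lemma SwEq.length_eq {w w' : List S} (h : SwEq E w w') : w.length = w'.length := by
  induction h with
  | refl => rfl
  | tail _ h ih => rw [ih, h.length_eq]

lemma SwEq.eq_nil {w : List S} (h : SwEq E w []) : w = [] := by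
  have := h.length_eq
  simpa using this

variable [DecidableEq S] [DecidableRel E]

variable (E) in
/-- remove the first visible occurrence of `a`, if any. -/
def vis (a : S) : List S → Option (List S)
  | [] => none
  | b :: t => if b = a then some t else if E b a then (vis a t).map (b :: ·) else none

lemma vis_none_iff (a : S) : ∀ w : List S, vis E a w = none ↔ ¬ HasVis E a w := by
  intro w
  induction w with
  | nil => simp [vis, HasVis]
  | cons b t ih =>
    by_cases hba : b = a
    · simp [vis, HasVis, hba]
    · by_cases hE : E b a
      · simp [vis, HasVis, hba, hE, ih]
      · simp [vis, HasVis, hba, hE]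

lemma vis_some (a : S) : ∀ (w w' : List S), vis E a w = some w' →
    ∃ u v, w = u ++ a :: v ∧ w' = u ++ v ∧ ∀ y ∈ u, E y a ∧ y ≠ a := by
  intro w
  induction w with
  | nil => intro w' h; simp [vis] at h
  | cons b t ih =>
    intro w' h
    by_cases hba : b = a
    · subst hba
      simp [vis] at h
      exact ⟨[], t, by simp, by simp [h], by simp⟩
    · by_cases hE : E b a
      · simp [vis, hba, hE] at h
        obtain ⟨t', ht', rfl⟩ := h
        obtain ⟨u, v, rfl, rfl, hu⟩ := ih t' ht'
        exact ⟨b :: u, v, rfl, rfl, by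
          intro y hy
          rcases List.mem_cons.mp hy with rfl | hy
          · exact ⟨hE, hba⟩
          · exact hu y hy⟩
      · simp [vis, hba, hE] at h

/-- Removing a visible `a` preserves visibility of letters commuting with `a`. -/
lemma hasVis_of_vis_some {a b : S} (hab : E a b) :
    ∀ {t t' : List S}, vis E a t = some t' → HasVis E b t' → HasVis E b t := by
  intro t
  induction t with
  | nil => intro t' h; simp [vis] at h
  | cons c t₂ ih =>
    intro t' h hb
    by_cases hca : c = a
    · subst hca
      simp [vis] at h
      subst h
      exact Or.inr ⟨hab, hb⟩
    · by_cases hE : E c a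
      · simp [vis, hca, hE] at h
        obtain ⟨t₂', ht₂', rfl⟩ := h
        rcases hb with rfl | ⟨hcb, hb⟩
        · exact Or.inl rfl
        · exact Or.inr ⟨hcb, ih ht₂' hb⟩
      · simp [vis, hca, hE] at h

/-- Also the other direction: visibility persists after removing a visible commuting letter. -/
lemma hasVis_vis_some {a b : S} (hab : a ≠ b) :
    ∀ {t t' : List S}, vis E a t = some t' → HasVis E b t → HasVis E b t' := by
  intro t
  induction t with
  | nil => intro t' h; simp [vis] at h
  | cons c t₂ ih =>
    intro t' h hb
    by_cases hca : c = a
    · subst hca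
      simp [vis] at h
      subst h
      rcases hb with rfl | ⟨_, hb⟩
      · exact absurd rfl hab
      · exact hb
    · by_cases hE : E c a
      · simp [vis, hca, hE] at h
        obtain ⟨t₂', ht₂', rfl⟩ := h
        rcases hb with rfl | ⟨hcb, hb⟩
        · exact Or.inl rfl
        · exact Or.inr ⟨hcb, ih ht₂' hb⟩
      · simp [vis, hca, hE] at h

/-- Removing a visible letter preserves reducedness. -/
lemma red_vis_some (hE : Symmetric E) (a : S) :
    ∀ {w w' : List S}, Red E w → vis E a w = some w' → Red E w' := by
  intro w
  induction w with
  | nil => intro w' _ h; simp [vis] at h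
  | cons b t ih =>
    intro w' hr h
    by_cases hba : b = a
    · subst hba
      simp [vis] at h
      subst h
      exact hr.2
    · by_cases hEba : E b a
      · simp [vis, hba, hEba] at h
        obtain ⟨t', ht', rfl⟩ := h
        refine ⟨fun hv => hr.1 (hasVis_of_vis_some (hE hEba) ht' hv), ih hr.2 ht'⟩
      · simp [vis, hba, hEba] at h

variable (E) in
/-- The action of the generator `a` on words. -/
def act (a : S) (w : List S) : List S := (vis E a w).getD (a :: w)

lemma act_of_vis_none {a : S} {w : List S} (h : vis E a w = none) : act E a w = a :: w := by
  simp [act, h]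

lemma act_of_vis_some {a : S} {w w' : List S} (h : vis E a w = some w') : act E a w = w' := by
  simp [act, h]

lemma red_act (hE : Symmetric E) (a : S) {w : List S} (hr : Red E w) : Red E (act E a w) := by
  rcases h : vis E a w with _ | w'
  · rw [act_of_vis_none h]
    exact ⟨(vis_none_iff a w).mp h, hr⟩
  · rw [act_of_vis_some h]
    exact red_vis_some hE a hr h

end Racg

namespace Racg
variable {S : Type*} {E : S → S → Prop} [DecidableEq S] [DecidableRel E]

lemma hasVis_sw (hE : Symmetric E) (a : S) {w w' : List S} (h : Sw E w w') :
    HasVis E a w ↔ HasVis E a w' := by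
  induction h with
  | swap b c t hbc =>
    show (b = a ∨ (E b a ∧ (c = a ∨ (E c a ∧ HasVis E a t)))) ↔
      (c = a ∨ (E c a ∧ (b = a ∨ (E b a ∧ HasVis E a t))))
    constructor
    · rintro (rfl | ⟨hba, rfl | ⟨hca, ht⟩⟩)
      · exact Or.inr ⟨hE hbc, Or.inl rfl⟩
      · exact Or.inl rfl
      · exact Or.inr ⟨hca, Or.inr ⟨hba, ht⟩⟩
    · rintro (rfl | ⟨hca, rfl | ⟨hba, ht⟩⟩)
      · exact Or.inr ⟨hbc, Or.inl rfl⟩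
      · exact Or.inl rfl
      · exact Or.inr ⟨hba, Or.inr ⟨hca, ht⟩⟩
  | cons c hst ih =>
    show (c = a ∨ (E c a ∧ HasVis E a _)) ↔ (c = a ∨ (E c a ∧ HasVis E a _))
    rw [ih]

lemma act_sw (hE : Symmetric E) (a : S) {w w' : List S} (h : Sw E w w') :
    SwEq E (act E a w) (act E a w') := by
  induction h with
  | swap b c t hbc =>
    by_cases hba : b = a
    · by_cases hca : c = a
      · rw [show c = b by rw [hba, hca]]
        exact SwEq.refl _
      · have h1 : E c a := hba ▸ hE hbc
        rw [act_of_vis_some (w' := c :: t) (by simp [vis, hba]),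
          act_of_vis_some (w' := c :: t) (by simp [vis, hca, h1, hba])]
        exact SwEq.refl _
    · by_cases hca : c = a
      · have h1 : E b a := hca ▸ hbc
        rw [act_of_vis_some (w' := b :: t) (by simp [vis, hba, h1, hca]),
          act_of_vis_some (w' := b :: t) (by simp [vis, hca])]
        exact SwEq.refl _
      · by_cases hEba : E b a
        · by_cases hEca : E c a
          · rcases hv : vis E a t with _ | t'
            · rw [act_of_vis_none (by simp [vis, hba, hca, hEba, hEca, hv]),
                act_of_vis_none (by simp [vis, hba, hca, hEba, hEca, hv])]
              exact Relation.ReflTransGen.single (Sw.cons a (Sw.swap b c t hbc))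
            · rw [act_of_vis_some (w' := b :: c :: t') (by simp [vis, hba, hca, hEba, hEca, hv]),
                act_of_vis_some (w' := c :: b :: t') (by simp [vis, hba, hca, hEba, hEca, hv])]
              exact Relation.ReflTransGen.single (Sw.swap b c t' hbc)
          · rw [act_of_vis_none (by simp [vis, hba, hca, hEba, hEca]),
              act_of_vis_none (by simp [vis, hba, hca, hEba, hEca])]
            exact Relation.ReflTransGen.single (Sw.cons a (Sw.swap b c t hbc))
        · by_cases hEca : E c a
          · rw [act_of_vis_none (by simp [vis, hba, hca, hEba, hEca]),
              act_of_vis_none (by simp [vis, hba, hca, hEba, hEca])]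
            exact Relation.ReflTransGen.single (Sw.cons a (Sw.swap b c t hbc))
          · rw [act_of_vis_none (by simp [vis, hba, hca, hEba]),
              act_of_vis_none (by simp [vis, hba, hca, hEca])]
            exact Relation.ReflTransGen.single (Sw.cons a (Sw.swap b c t hbc))
  | @cons c t t' hst ih =>
    by_cases hca : c = a
    · rw [act_of_vis_some (w' := t) (by simp [vis, hca]),
        act_of_vis_some (w' := t') (by simp [vis, hca])]
      exact Relation.ReflTransGen.single hst
    · by_cases hEca : E c a
      · rcases hv : vis E a t with _ | t₁
        · have hv' : vis E a t' = none := by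
            rw [vis_none_iff] at hv ⊢
            rw [← hasVis_sw hE a hst]
            exact hv
          rw [act_of_vis_none (by simp [vis, hca, hEca, hv]),
            act_of_vis_none (by simp [vis, hca, hEca, hv'])]
          exact SwEq.cons a (SwEq.cons c (Relation.ReflTransGen.single hst))
        · rcases hv' : vis E a t' with _ | t₁'
          · exfalso
            rw [vis_none_iff] at hv'
            rw [← hasVis_sw hE a hst] at hv'
            rw [← vis_none_iff] at hv'
            rw [hv] at hv'
            exact Option.some_ne_none _ hv'
          · rw [act_of_vis_some (w' := c :: t₁) (by simp [vis, hca, hEca, hv]),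
              act_of_vis_some (w' := c :: t₁') (by simp [vis, hca, hEca, hv'])]
            have h2 := ih
            rw [act_of_vis_some hv, act_of_vis_some hv'] at h2
            exact SwEq.cons c h2
      · rw [act_of_vis_none (by simp [vis, hca, hEca]),
          act_of_vis_none (by simp [vis, hca, hEca])]
        exact SwEq.cons a (SwEq.cons c (Relation.ReflTransGen.single hst))

lemma act_sweq (hE : Symmetric E) (a : S) {w w' : List S} (h : SwEq E w w') :
    SwEq E (act E a w) (act E a w') := by
  induction h with
  | refl => exact SwEq.refl _
  | tail _ h ih => exact SwEq.trans ih (act_sw hE a h)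

end Racg

namespace Racg
variable {S : Type*} {E : S → S → Prop} [DecidableEq S] [DecidableRel E]

lemma hasVis_append_right (a : S) :
    ∀ (u v : List S), (∀ y ∈ u, E y a ∧ y ≠ a) → HasVis E a (u ++ v) → HasVis E a v := by
  intro u
  induction u with
  | nil => intro v _ h; exact h
  | cons y u ih =>
    intro v hu h
    rcases h with rfl | ⟨_, h⟩
    · exact absurd rfl (hu y (by simp)).2
    · exact ih v (fun z hz => hu z (by simp [hz])) h

lemma hasVis_append_mid (a : S) : ∀ (v₁ v₂ : List S), (∀ y ∈ v₁, E y a) →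
    HasVis E a (v₁ ++ a :: v₂) := by
  intro v₁
  induction v₁ with
  | nil => intro v₂ _; exact Or.inl rfl
  | cons y v₁ ih =>
    intro v₂ h
    exact Or.inr ⟨h y (by simp), ih v₂ (fun z hz => h z (by simp [hz]))⟩

lemma not_red_double (a : S) : ∀ (u v : List S), HasVis E a v → ¬ Red E (u ++ a :: v) := by
  intro u
  induction u with
  | nil => intro v hv hr; exact hr.1 hv
  | cons y u ih => intro v hv hr; exact ih v hv hr.2

lemma sweq_cons_middle (hE : Symmetric E) (a : S) : ∀ (u t : List S), (∀ y ∈ u, E y a) →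
    SwEq E (a :: (u ++ t)) (u ++ a :: t) := by
  intro u
  induction u with
  | nil => intro t _; exact SwEq.refl _
  | cons y u ih =>
    intro t h
    exact SwEq.trans
      (Relation.ReflTransGen.single (Sw.swap a y (u ++ t) (hE (h y (by simp)))))
      (SwEq.cons y (ih t (fun z hz => h z (by simp [hz]))))

lemma act_act (hE : Symmetric E) (a : S) {w : List S} (hr : Red E w) :
    SwEq E (act E a (act E a w)) w := by
  rcases hv : vis E a w with _ | w'
  · rw [act_of_vis_none hv, act_of_vis_some (w' := w) (by simp [vis])]
    exact SwEq.refl _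
  · obtain ⟨u, v, rfl, rfl, hu⟩ := vis_some a _ _ hv
    have hnone : vis E a (u ++ v) = none := by
      rw [vis_none_iff]
      intro hvis
      have h1 : HasVis E a v := hasVis_append_right a u v hu hvis
      exact not_red_double a u v h1 hr
    rw [act_of_vis_some hv, act_of_vis_none hnone]
    exact sweq_cons_middle hE a u v (fun y hy => (hu y hy).1)

lemma vis_vis {a b : S} (hab : a ≠ b) : ∀ (w wa wb : List S),
    vis E a w = some wa → vis E b w = some wb →
    ∃ w', vis E b wa = some w' ∧ vis E a wb = some w' := by
  intro w
  induction w with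
  | nil => intro wa wb h; simp [vis] at h
  | cons c t ih =>
    intro wa wb ha hb
    by_cases hca : c = a
    · have hcb : ¬ c = b := fun h => hab (hca ▸ h.symm ▸ rfl)
      simp [vis, hca] at ha
      by_cases hEcb : E c b
      · simp [vis, hcb, hEcb] at hb
        obtain ⟨tb, htb, rfl⟩ := hb
        refine ⟨tb, ?_, ?_⟩
        · rw [← ha]; exact htb
        · simp [vis, hca]
      · simp [vis, hcb, hEcb] at hb
    · by_cases hcb : c = b
      · simp [vis, hcb] at hb
        by_cases hEca : E c a
        · simp [vis, hca, hEca] at ha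
          obtain ⟨ta, hta, rfl⟩ := ha
          refine ⟨ta, ?_, ?_⟩
          · simp [vis, hcb]
          · rw [← hb]; exact hta
        · simp [vis, hca, hEca] at ha
      · by_cases hEca : E c a
        · by_cases hEcb : E c b
          · simp [vis, hca, hEca] at ha
            simp [vis, hcb, hEcb] at hb
            obtain ⟨ta, hta, rfl⟩ := ha
            obtain ⟨tb, htb, rfl⟩ := hb
            obtain ⟨t', h1, h2⟩ := ih ta tb hta htb
            exact ⟨c :: t', by simp [vis, hcb, hEcb, h1], by simp [vis, hca, hEca, h2]⟩
          · simp [vis, hcb, hEcb] at hb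
        · simp [vis, hca, hEca] at ha

lemma act_comm (hE : Symmetric E) {a b : S} (hab : E a b) (w : List S) :
    SwEq E (act E a (act E b w)) (act E b (act E a w)) := by
  by_cases hne : a = b
  · subst hne; exact SwEq.refl _
  have hne' : ¬ b = a := fun h => hne h.symm
  rcases hva : vis E a w with _ | wa
  · rcases hvb : vis E b w with _ | wb
    · rw [act_of_vis_none hvb, act_of_vis_none hva,
        act_of_vis_none (w := b :: w) (by simp [vis, hne', hE hab, hva]),
        act_of_vis_none (w := a :: w) (by simp [vis, hne, hab, hvb])]
      exact Relation.ReflTransGen.single (Sw.swap a b w hab)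
    · rw [act_of_vis_none hva, act_of_vis_some hvb]
      have h1 : vis E a wb = none := by
        rw [vis_none_iff] at hva ⊢
        exact fun h => hva (hasVis_of_vis_some (hE hab) hvb h)
      rw [act_of_vis_none h1,
        act_of_vis_some (w := a :: w) (w' := a :: wb) (by simp [vis, hne, hab, hvb])]
      exact SwEq.refl _
  · rcases hvb : vis E b w with _ | wb
    · rw [act_of_vis_some hva, act_of_vis_none hvb]
      have h1 : vis E b wa = none := by
        rw [vis_none_iff] at hvb ⊢
        exact fun h => hvb (hasVis_of_vis_some hab hva h)
      rw [act_of_vis_none h1,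
        act_of_vis_some (w := b :: w) (w' := b :: wa) (by simp [vis, hne', hE hab, hva])]
      exact SwEq.refl _
    · obtain ⟨w', h1, h2⟩ := vis_vis hne w wa wb hva hvb
      rw [act_of_vis_some hva, act_of_vis_some hvb, act_of_vis_some h1, act_of_vis_some h2]
      exact SwEq.refl _

end Racg

namespace Racg
variable {S : Type*} (E : S → S → Prop) [DecidableEq S] [DecidableRel E]

/-- The setoid of reduced words up to swap-equivalence. -/
def redSetoid (hE : Symmetric E) : Setoid {w : List S // Red E w} where
  r w w' := SwEq E w.1 w'.1
  iseqv := ⟨fun w => SwEq.refl _, fun h => SwEq.symm hE h, fun h h' => SwEq.trans h h'⟩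

/-- Normal forms: reduced words up to swap-equivalence. -/
def NF (hE : Symmetric E) := Quotient (redSetoid E hE)

variable {E}
variable (hE : Symmetric E)
include hE

def actN (a : S) : NF E hE → NF E hE :=
  Quotient.map (fun w => ⟨act E a w.1, red_act hE a w.2⟩) (fun _ _ h => act_sweq hE a h)

lemma actN_mk (a : S) (w : {w : List S // Red E w}) :
    actN hE a (Quotient.mk _ w) = Quotient.mk _ ⟨act E a w.1, red_act hE a w.2⟩ := rfl

lemma actN_invol (a : S) : Function.Involutive (actN hE a) := by
  intro x
  induction x using Quotient.ind with
  | _ w => exact Quotient.sound (act_act hE a w.2)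

/-- The action of a generator on normal forms, as a permutation. -/
def actPerm (a : S) : Equiv.Perm (NF E hE) := (actN_invol hE a).toPerm

lemma actPerm_apply (a : S) (x : NF E hE) : actPerm hE a x = actN hE a x := rfl

lemma actPerm_sq (a : S) : actPerm hE a * actPerm hE a = 1 := by
  ext x
  exact actN_invol hE a x

lemma actPerm_comm {a b : S} (hab : E a b) :
    actPerm hE a * actPerm hE b = actPerm hE b * actPerm hE a := by
  ext x
  induction x using Quotient.ind with
  | _ w => exact Quotient.sound (act_comm hE hab w.1)

variable (E) in
/-- Iterated action on the empty word: the normal form of a word. -/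
def nf (L : List S) : List S := L.foldr (act E) []

lemma red_nf (L : List S) : Red E (nf E L) := by
  induction L with
  | nil => trivial
  | cons a t ih => exact red_act hE a ih

lemma step_chain_cons (a : S) {t t' : List S} (h : Relation.ReflTransGen (Step E) t t') :
    Relation.ReflTransGen (Step E) (a :: t) (a :: t') := by
  induction h with
  | refl => exact Relation.ReflTransGen.refl
  | tail _ h ih => exact Relation.ReflTransGen.tail ih (Step.cons a h)

lemma step_chain_append (u : List S) {t t' : List S}
    (h : Relation.ReflTransGen (Step E) t t') :
    Relation.ReflTransGen (Step E) (u ++ t) (u ++ t') := by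
  induction u with
  | nil => exact h
  | cons y u ih => exact step_chain_cons hE y ih

lemma step_cons_middle (a : S) : ∀ (u s : List S), (∀ y ∈ u, E y a) →
    Relation.ReflTransGen (Step E) (a :: (u ++ s)) (u ++ a :: s) := by
  intro u
  induction u with
  | nil => intro s _; exact Relation.ReflTransGen.refl
  | cons y u ih =>
    intro s h
    exact Relation.ReflTransGen.head (Step.swap a y (u ++ s) (hE (h y (by simp))))
      (step_chain_cons hE y (ih s (fun z hz => h z (by simp [hz]))))

lemma step_to_act (a : S) (w : List S) :
    Relation.ReflTransGen (Step E) (a :: w) (act E a w) := by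
  rcases hv : vis E a w with _ | w'
  · rw [act_of_vis_none hv]
  · obtain ⟨u, v, rfl, rfl, hu⟩ := vis_some a _ _ hv
    rw [act_of_vis_some hv]
    refine Relation.ReflTransGen.trans
      (step_cons_middle hE a u (a :: v) (fun y hy => (hu y hy).1)) ?_
    exact step_chain_append hE u (Relation.ReflTransGen.single (Step.del a v))

lemma nf_chain (L : List S) : Relation.ReflTransGen (Step E) L (nf E L) := by
  induction L with
  | nil => exact Relation.ReflTransGen.refl
  | cons a t ih =>
    exact Relation.ReflTransGen.trans (step_chain_cons hE a ih) (step_to_act hE a (nf E t))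

lemma prod_actPerm_apply (L : List S) (x : NF E hE) :
    ((L.map (actPerm hE)).prod) x = L.foldr (actN hE) x := by
  induction L with
  | nil => rfl
  | cons a t ih =>
    simp only [List.map_cons, List.prod_cons, List.foldr_cons, Equiv.Perm.mul_apply, ih]
    rfl

lemma foldr_actN_nil (L : List S) :
    L.foldr (actN hE) (Quotient.mk _ ⟨[], trivial⟩) =
      Quotient.mk _ ⟨nf E L, red_nf hE L⟩ := by
  induction L with
  | nil => rfl
  | cons a t ih =>
    exact congrArg (actN hE a) ih

/-- The word problem for right-angled Coxeter-type presentations: a word mapping to `1`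
in the presented group can be reduced to the empty word by swaps and deletions. -/
theorem step_chain_of_one {rels : Set (FreeGroup S)}
    (hrels : ∀ r ∈ rels, (∃ a : S, r = FreeGroup.of a * FreeGroup.of a) ∨
      ∃ a b : S, E a b ∧ r = FreeGroup.of a * FreeGroup.of b *
        (FreeGroup.of a)⁻¹ * (FreeGroup.of b)⁻¹)
    (L : List S)
    (h : ((L.map (PresentedGroup.of (rels := rels))).prod : PresentedGroup rels) = 1) :
    Relation.ReflTransGen (Step E) L [] := by
  have hlift : ∀ r ∈ rels, FreeGroup.lift (actPerm hE) r = 1 := by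
    intro r hr
    rcases hrels r hr with ⟨a, rfl⟩ | ⟨a, b, hab, rfl⟩
    · simp only [map_mul, FreeGroup.lift_apply_of]
      exact actPerm_sq hE a
    · simp only [map_mul, map_inv, FreeGroup.lift_apply_of]
      exact commutatorElement_eq_one_iff_mul_comm.mpr (actPerm_comm hE hab)
  let φ : PresentedGroup rels →* Equiv.Perm (NF E hE) := PresentedGroup.toGroup hlift
  have h2 : φ ((L.map PresentedGroup.of).prod) = 1 := by rw [h]; exact map_one φ
  rw [map_list_prod, List.map_map] at h2
  have h3 : L.map (φ ∘ PresentedGroup.of) = L.map (actPerm hE) := by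
    apply List.map_congr_left
    intro a _
    exact PresentedGroup.toGroup.of hlift
  rw [h3] at h2
  have h5 := congrArg (fun p : Equiv.Perm (NF E hE) =>
    p (Quotient.mk _ (⟨[], trivial⟩ : {w : List S // Red E w}))) h2
  replace h5 := (foldr_actN_nil hE L).symm.trans ((prod_actPerm_apply hE L _).symm.trans h5)
  have h6 : SwEq E (nf E L) [] := Quotient.exact h5
  have h7 : nf E L = [] := SwEq.eq_nil h6
  have h8 := nf_chain hE L
  rw [h7] at h8
  exact h8

end Racg

namespace Racg
variable {S : Type*} {E : S → S → Prop}

lemma step_nil {M : List S} (h : Step E [] M) : False := by cases h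

lemma step_singleton {x : S} {M : List S} (h : Step E [x] M) : False := by
  cases h with
  | cons a h => exact step_nil h

lemma step_cons_cons {x y : S} {t M : List S} (h : Step E (x :: y :: t) M) :
    (E x y ∧ M = y :: x :: t) ∨ (y = x ∧ M = t) ∨
      ∃ M', Step E (y :: t) M' ∧ M = x :: M' := by
  cases h with
  | swap a b t h => exact Or.inl ⟨h, rfl⟩
  | del a t => exact Or.inr (Or.inl ⟨rfl, rfl⟩)
  | cons a h => exact Or.inr (Or.inr ⟨_, h, rfl⟩)

end Racg



/-- Generators of the Gauss diagram group `D_n`: subsets of `{1,…,n}` of size at least `2`. -/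
abbrev GaussGen (n : ℕ) := {I : Finset (Fin n) // 2 ≤ I.card}

/-- The defining relations (d1)-(d2) of the Gauss diagram group `D_n`. -/
def gaussRels (n : ℕ) : Set (FreeGroup (GaussGen n)) :=
  {w | (∃ a : GaussGen n, w = FreeGroup.of a * FreeGroup.of a) ∨
    (∃ a b : GaussGen n, (Disjoint a.1 b.1 ∨ a.1 ⊆ b.1) ∧
      w = FreeGroup.of a * FreeGroup.of b * (FreeGroup.of a)⁻¹ * (FreeGroup.of b)⁻¹)}

/-- Mostovoy's Gauss diagram group `D_n`, a right-angled Coxeter group. -/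
abbrev GaussGroup (n : ℕ) := PresentedGroup (gaussRels n)

lemma gaussRel_one {n : ℕ} {r : FreeGroup (GaussGen n)} (h : r ∈ gaussRels n) :
    PresentedGroup.mk (gaussRels n) r = 1 :=
  (QuotientGroup.eq_one_iff _).mpr (Subgroup.subset_normalClosure h)

/-- The action of a permutation on the generators of `D_n`: `σ • τ_I = τ_{σ(I)}`. -/
def permGen (n : ℕ) (σ : Equiv.Perm (Fin n)) (a : GaussGen n) : GaussGen n :=
  ⟨a.1.image σ, by rw [Finset.card_image_of_injective _ σ.injective]; exact a.2⟩

lemma permGen_rels (n : ℕ) (σ : Equiv.Perm (Fin n)) : ∀ r ∈ gaussRels n,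
    FreeGroup.lift (fun a => (PresentedGroup.of (rels := gaussRels n) (permGen n σ a))) r = 1 := by
  rintro r (⟨a, rfl⟩ | ⟨a, b, hab, rfl⟩)
  · have h1 : (PresentedGroup.mk (gaussRels n))
        (FreeGroup.of (permGen n σ a) * FreeGroup.of (permGen n σ a)) = 1 :=
      gaussRel_one (Or.inl ⟨permGen n σ a, rfl⟩)
    rw [map_mul] at h1
    simpa [PresentedGroup.of] using h1
  · have hab' : Disjoint (permGen n σ a).1 (permGen n σ b).1 ∨
        (permGen n σ a).1 ⊆ (permGen n σ b).1 := by
      rcases hab with h | h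
      · exact Or.inl ((Finset.disjoint_image σ.injective).mpr h)
      · exact Or.inr (Finset.image_subset_image h)
    have h1 : (PresentedGroup.mk (gaussRels n))
        (FreeGroup.of (permGen n σ a) * FreeGroup.of (permGen n σ b) *
          (FreeGroup.of (permGen n σ a))⁻¹ * (FreeGroup.of (permGen n σ b))⁻¹) = 1 :=
      gaussRel_one (Or.inr ⟨permGen n σ a, permGen n σ b, hab', rfl⟩)
    rw [map_mul, map_mul, map_mul, map_inv, map_inv] at h1
    simpa [PresentedGroup.of] using h1

/-- The endomorphism of `D_n` induced by a permutation. -/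
def permHom (n : ℕ) (σ : Equiv.Perm (Fin n)) : GaussGroup n →* GaussGroup n :=
  PresentedGroup.toGroup (permGen_rels n σ)

lemma permHom_of (n : ℕ) (σ : Equiv.Perm (Fin n)) (a : GaussGen n) :
    permHom n σ (PresentedGroup.of a) = PresentedGroup.of (permGen n σ a) :=
  PresentedGroup.toGroup.of _

lemma permHom_comp (n : ℕ) (σ τ : Equiv.Perm (Fin n)) :
    (permHom n σ).comp (permHom n τ) = permHom n (σ * τ) := by
  ext x
  simp only [MonoidHom.comp_apply, permHom_of]
  congr 1
  apply Subtype.ext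
  simp only [permGen, Finset.image_image]
  rfl

lemma permHom_one (n : ℕ) : permHom n 1 = MonoidHom.id (GaussGroup n) := by
  ext x
  simp only [MonoidHom.id_apply, permHom_of]
  congr 1
  apply Subtype.ext
  simp [permGen]

lemma permHom_apply_apply (n : ℕ) (σ τ : Equiv.Perm (Fin n)) (x : GaussGroup n) :
    permHom n σ (permHom n τ x) = permHom n (σ * τ) x :=
  DFunLike.congr_fun (permHom_comp n σ τ) x

/-- The action of `S_n` on `D_n` by `σ • τ_I = τ_{σ(I)}`, as a homomorphism to automorphisms. -/
def permAut (n : ℕ) : Equiv.Perm (Fin n) →* MulAut (GaussGroup n) where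
  toFun σ :=
    { toFun := permHom n σ
      invFun := permHom n σ⁻¹
      left_inv := fun x => by
        rw [permHom_apply_apply, inv_mul_cancel, permHom_one, MonoidHom.id_apply]
      right_inv := fun x => by
        rw [permHom_apply_apply, mul_inv_cancel, permHom_one, MonoidHom.id_apply]
      map_mul' := map_mul _ }
  map_one' := by
    apply MulEquiv.ext
    intro x
    simp only [MulEquiv.coe_mk, Equiv.coe_fn_mk]
    rw [permHom_one]
    rfl
  map_mul' := fun σ τ => by
    apply MulEquiv.ext
    intro x
    simp only [MulEquiv.coe_mk, Equiv.coe_fn_mk, MulAut.mul_apply]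
    exact (permHom_apply_apply n σ τ x).symm



section CactusApp

variable {n : ℕ}

lemma wPerm_apply_wPerm (n p q : ℕ) (i : Fin n) :
    wPerm n p q (wPerm n p q i) = i := by
  show wFun n p q (wFun n p q i) = i
  exact wFun_involutive n p q i

lemma mem_intervalFinset {n p q : ℕ} (i : Fin n) :
    i ∈ intervalFinset n p q ↔ p ≤ (i : ℕ) + 1 ∧ (i : ℕ) + 1 ≤ q := by
  simp [intervalFinset]

lemma mem_image_wPerm {p q m r : ℕ} (i : Fin n) :
    i ∈ (intervalFinset n m r).image (wPerm n p q) ↔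
      wPerm n p q i ∈ intervalFinset n m r := by
  constructor
  · rintro h
    rw [Finset.mem_image] at h
    obtain ⟨j, hj, rfl⟩ := h
    rwa [wPerm_apply_wPerm]
  · intro h
    rw [Finset.mem_image]
    exact ⟨wPerm n p q i, h, wPerm_apply_wPerm n p q i⟩

/-- Image of a nested interval under the reflection. -/
lemma image_wPerm_nested {p q m r : ℕ} (h1 : 1 ≤ p) (h2 : p ≤ m) (h3 : m < r) (h4 : r ≤ q)
    (h5 : q ≤ n) :
    (intervalFinset n m r).image (wPerm n p q) = intervalFinset n (p + q - r) (p + q - m) := by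
  ext i
  have hi := i.2
  rw [mem_image_wPerm, mem_intervalFinset, mem_intervalFinset, wPerm_apply_val]
  split_ifs <;> omega

/-- The reflection along `[p,q]` fixes an interval disjoint from `[p,q]`. -/
lemma image_wPerm_disjoint {p q m r : ℕ} (h1 : 1 ≤ m) (h3 : m < r) (h5 : r ≤ n)
    (hd : q < m ∨ r < p) :
    (intervalFinset n m r).image (wPerm n p q) = intervalFinset n m r := by
  ext i
  have hi := i.2
  rw [mem_image_wPerm, mem_intervalFinset, mem_intervalFinset, wPerm_apply_val]
  split_ifs <;> omega

/-- The reflection along a subinterval `[p,q] ⊆ [m,r]` preserves the bigger interval. -/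
lemma image_wPerm_sub {p q m r : ℕ} (h1 : 1 ≤ p) (h2 : m ≤ p) (h3 : p < q) (h4 : q ≤ r)
    (h5 : r ≤ n) :
    (intervalFinset n m r).image (wPerm n p q) = intervalFinset n m r := by
  ext i
  have hi := i.2
  rw [mem_image_wPerm, mem_intervalFinset, mem_intervalFinset, wPerm_apply_val]
  split_ifs <;> omega

lemma intervalFinset_subset {p q m r : ℕ} (hm : (m, r) ∈ cactusSet n)
    (hp : (p, q) ∈ cactusSet n) (h : intervalFinset n m r ⊆ intervalFinset n p q) :
    p ≤ m ∧ r ≤ q := by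
  obtain ⟨hm1, hm2, hm3⟩ := hm
  obtain ⟨hp1, hp2, hp3⟩ := hp
  have e1 := h (x := ⟨m - 1, by omega⟩) (by rw [mem_intervalFinset]; simp; omega)
  have e2 := h (x := ⟨r - 1, by omega⟩) (by rw [mem_intervalFinset]; simp; omega)
  rw [mem_intervalFinset] at e1 e2
  simp at e1 e2
  omega

lemma intervalFinset_disjoint {p q m r : ℕ} (hm : (m, r) ∈ cactusSet n)
    (hp : (p, q) ∈ cactusSet n) (h : Disjoint (intervalFinset n p q) (intervalFinset n m r)) :
    q < m ∨ r < p := by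
  obtain ⟨hm1, hm2, hm3⟩ := hm
  obtain ⟨hp1, hp2, hp3⟩ := hp
  by_contra hc
  push_neg at hc
  obtain ⟨hc1, hc2⟩ := hc
  have hx : (⟨max p m - 1, by omega⟩ : Fin n) ∈ intervalFinset n p q := by
    rw [mem_intervalFinset]; simp; omega
  have hy : (⟨max p m - 1, by omega⟩ : Fin n) ∈ intervalFinset n m r := by
    rw [mem_intervalFinset]; simp; omega
  exact Finset.disjoint_left.mp h hx hy

lemma intervalFinset_inj {p q m r : ℕ} (hm : (m, r) ∈ cactusSet n)
    (hp : (p, q) ∈ cactusSet n) (h : intervalFinset n m r = intervalFinset n p q) :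
    m = p ∧ r = q := by
  have h1 := intervalFinset_subset hm hp h.le
  have h2 := intervalFinset_subset hp hm h.ge
  omega

lemma wPerm_mul_self (n p q : ℕ) : wPerm n p q * wPerm n p q = 1 := by
  nth_rewrite 2 [← wPerm_inv n p q]
  exact mul_inv_cancel _

/-- `w_C w_A = w_A w_B` for nested intervals `[m,r] ⊆ [p,q]`, `C = [p+q-r, p+q-m]`. -/
lemma wPerm_nested_comm {p q m r : ℕ} (h1 : 1 ≤ p) (h2 : p ≤ m) (h3 : m < r) (h4 : r ≤ q)
    (h5 : q ≤ n) :
    wPerm n (p + q - r) (p + q - m) * wPerm n p q = wPerm n p q * wPerm n m r := by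
  ext i
  simp only [Equiv.Perm.mul_apply, wPerm_apply_val]
  split_ifs <;> omega

/-- `w_A w_B = w_B w_A` for disjoint intervals. -/
lemma wPerm_disjoint_comm {p q m r : ℕ} (hd : q < m ∨ r < p) :
    wPerm n p q * wPerm n m r = wPerm n m r * wPerm n p q := by
  ext i
  simp only [Equiv.Perm.mul_apply, wPerm_apply_val]
  split_ifs <;> omega

/-- The commutation relation on generators of the Gauss diagram group. -/
def gaussE (n : ℕ) (a b : GaussGen n) : Prop := Disjoint a.1 b.1 ∨ a.1 ⊆ b.1 ∨ b.1 ⊆ a.1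

lemma gaussE_symm (n : ℕ) : Symmetric (gaussE n) := by
  rintro a b (h | h | h)
  · exact Or.inl h.symm
  · exact Or.inr (Or.inr h)
  · exact Or.inr (Or.inl h)

instance (n : ℕ) : DecidableRel (gaussE n) := fun a b => by
  unfold gaussE; infer_instance

/-- The generator of `D_n` associated with a cactus generator. -/
def genOf (n : ℕ) (a : cactusSet n) : GaussGen n :=
  ⟨intervalFinset n a.1.1 a.1.2, two_le_intervalFinset_card a.2⟩

/-- The image word in `D_n` of a word in the cactus group, twisted by a permutation. -/
def gw (n : ℕ) : Equiv.Perm (Fin n) → List (cactusSet n) → List (GaussGen n)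
  | _, [] => []
  | σ, a :: L => permGen n σ (genOf n a) :: gw n (σ * wPerm n a.1.1 a.1.2) L

lemma gw_length (n : ℕ) : ∀ (L : List (cactusSet n)) (σ), (gw n σ L).length = L.length := by
  intro L
  induction L with
  | nil => intro σ; rfl
  | cons a L ih => intro σ; simp [gw, ih]

lemma cactusRel_one {n : ℕ} {r : FreeGroup (cactusSet n)} (h : r ∈ cactusRels (cactusSet n)) :
    PresentedGroup.mk (cactusRels (cactusSet n)) r = 1 :=
  (QuotientGroup.eq_one_iff _).mpr (Subgroup.subset_normalClosure h)

lemma cactus_sq {n : ℕ} (a : cactusSet n) :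
    (PresentedGroup.of a : CactusGroup n) * PresentedGroup.of a = 1 := by
  have h := cactusRel_one (Or.inl ⟨a, rfl⟩)
  rw [map_mul] at h
  exact h

lemma cactus_comm {n : ℕ} (a b : cactusSet n) (h : a.1.2 < b.1.1 ∨ b.1.2 < a.1.1) :
    (PresentedGroup.of a : CactusGroup n) * PresentedGroup.of b =
      PresentedGroup.of b * PresentedGroup.of a := by
  have h1 := cactusRel_one (Or.inr (Or.inl ⟨a, b, h, rfl⟩))
  rw [map_mul, map_mul, map_mul, map_inv, map_inv] at h1
  exact commutatorElement_eq_one_iff_mul_comm.mp h1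

lemma cactus_j3 {n : ℕ} (a b c : cactusSet n) (h1 : a.1.1 ≤ b.1.1) (h2 : b.1.2 ≤ a.1.2)
    (h3 : c.1.1 = a.1.1 + a.1.2 - b.1.2) (h4 : c.1.2 = a.1.1 + a.1.2 - b.1.1) :
    (PresentedGroup.of a : CactusGroup n) * PresentedGroup.of b =
      PresentedGroup.of c * PresentedGroup.of a := by
  have hr := cactusRel_one (Or.inr (Or.inr ⟨a, b, c, h1, h2, h3, h4, rfl⟩))
  rw [map_mul, map_mul, map_mul, map_inv, map_inv] at hr
  have h5 : (PresentedGroup.of a : CactusGroup n) * PresentedGroup.of b *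
      (PresentedGroup.of a)⁻¹ = PresentedGroup.of c := mul_inv_eq_one.mp hr
  rw [← h5]
  group

/-- Every element of the cactus group is a product of (positive) generators. -/
lemma exists_word {n : ℕ} (c : CactusGroup n) :
    ∃ L : List (cactusSet n), c = (L.map PresentedGroup.of).prod := by
  induction c using PresentedGroup.induction_on with
  | _ z =>
    induction z using FreeGroup.induction_on with
    | C1 => exact ⟨[], rfl⟩
    | of x => exact ⟨[x], by simp; rfl⟩
    | inv_of x _ =>
      refine ⟨[x], ?_⟩
      simp only [List.map_cons, List.map_nil, List.prod_cons, List.prod_nil, mul_one]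
      exact inv_eq_of_mul_eq_one_right (cactus_sq x)
    | mul x y hx hy =>
      obtain ⟨L1, h1⟩ := hx
      obtain ⟨L2, h2⟩ := hy
      exact ⟨L1 ++ L2, by rw [List.map_append, List.prod_append, ← h1, ← h2]; rfl⟩

end CactusApp

section LiftStep

variable {n : ℕ}

lemma wPerm_nested_comm' {p q m r : ℕ} (h1 : 1 ≤ m) (h2 : m ≤ p) (h3 : p < q) (h4 : q ≤ r)
    (h5 : r ≤ n) :
    wPerm n m r * wPerm n (m + r - q) (m + r - p) = wPerm n p q * wPerm n m r := by
  ext i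
  simp only [Equiv.Perm.mul_apply, wPerm_apply_val]
  split_ifs <;> omega

lemma permGen_mul_eq (σ τ : Equiv.Perm (Fin n)) (x : GaussGen n) :
    permGen n (σ * τ) x = permGen n σ (permGen n τ x) := by
  apply Subtype.ext
  show x.1.image ⇑(σ * τ) = (x.1.image ⇑τ).image ⇑σ
  rw [Finset.image_image]
  rfl

lemma gaussE_permGen_iff (σ : Equiv.Perm (Fin n)) (x y : GaussGen n) :
    gaussE n (permGen n σ x) (permGen n σ y) ↔ gaussE n x y := by
  unfold gaussE
  rw [show (permGen n σ x).1 = x.1.image σ from rfl, show (permGen n σ y).1 = y.1.image σ from rfl,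
    Finset.disjoint_image σ.injective, Finset.image_subset_image_iff σ.injective,
    Finset.image_subset_image_iff σ.injective]

lemma image_image_wPerm_self (p q : ℕ) (s : Finset (Fin n)) :
    (s.image ⇑(wPerm n p q)).image ⇑(wPerm n p q) = s := by
  rw [Finset.image_image]
  have h : ⇑(wPerm n p q) ∘ ⇑(wPerm n p q) = id := funext (wPerm_apply_wPerm n p q)
  rw [h, Finset.image_id]

lemma lift_step : ∀ (L : List (cactusSet n)) (σ : Equiv.Perm (Fin n))
    (M : List (GaussGen n)), Racg.Step (gaussE n) (gw n σ L) M →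
    ∃ L' : List (cactusSet n),
      ((L'.map PresentedGroup.of).prod : CactusGroup n) = (L.map PresentedGroup.of).prod ∧
      gw n σ L' = M := by
  intro L
  induction L with
  | nil => intro σ M h; exact (Racg.step_nil h).elim
  | cons a L ih =>
    intro σ M h
    rcases L with _ | ⟨b, T⟩
    · exact (Racg.step_singleton h).elim
    obtain ⟨⟨p, q⟩, ha⟩ := a
    obtain ⟨⟨m, r⟩, hb⟩ := b
    obtain ⟨ha1, ha2, ha3⟩ := ha
    obtain ⟨hb1, hb2, hb3⟩ := hb
    set a : cactusSet n := ⟨(p, q), ha1, ha2, ha3⟩ with hadef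
    set b : cactusSet n := ⟨(m, r), hb1, hb2, hb3⟩ with hbdef
    have hgw : gw n σ (a :: b :: T) = permGen n σ (genOf n a) ::
        permGen n (σ * wPerm n p q) (genOf n b) ::
        gw n (σ * wPerm n p q * wPerm n m r) T := rfl
    rw [hgw] at h
    have hAA : (intervalFinset n p q).image ⇑(wPerm n p q) = intervalFinset n p q :=
      image_wPerm_sub ha1 (le_refl p) ha2 (le_refl q) ha3
    rcases Racg.step_cons_cons h with ⟨hE, rfl⟩ | ⟨heq, rfl⟩ | ⟨M', hM', rfl⟩
    · -- swap case
      rw [permGen_mul_eq, gaussE_permGen_iff] at hE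
      rcases hE with hd | hsub | hsup
      · -- disjoint
        have hd1 : Disjoint (intervalFinset n p q)
            ((intervalFinset n m r).image ⇑(wPerm n p q)) := hd
        rw [← hAA, Finset.disjoint_image (wPerm n p q).injective] at hd1
        have hpq : q < m ∨ r < p :=
          intervalFinset_disjoint ⟨hb1, hb2, hb3⟩ ⟨ha1, ha2, ha3⟩ hd1
        have hfixB : (intervalFinset n m r).image ⇑(wPerm n p q) = intervalFinset n m r :=
          image_wPerm_disjoint hb1 hb2 hb3 hpq
        have hfixA : (intervalFinset n p q).image ⇑(wPerm n m r) = intervalFinset n p q :=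
          image_wPerm_disjoint ha1 ha2 ha3 hpq.symm
        refine ⟨b :: a :: T, ?_, ?_⟩
        · simp only [List.map_cons, List.prod_cons]
          rw [← mul_assoc, ← cactus_comm a b hpq, mul_assoc]
        · show permGen n σ (genOf n b) :: permGen n (σ * wPerm n m r) (genOf n a) ::
            gw n (σ * wPerm n m r * wPerm n p q) T = _
          congr 1
          · apply Subtype.ext
            show (intervalFinset n m r).image ⇑σ = (intervalFinset n m r).image ⇑(σ * wPerm n p q)
            rw [Equiv.Perm.coe_mul, ← Finset.image_image, hfixB]
          congr 1
          · apply Subtype.ext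
            show (intervalFinset n p q).image ⇑(σ * wPerm n m r) = (intervalFinset n p q).image ⇑σ
            rw [Equiv.Perm.coe_mul, ← Finset.image_image, hfixA]
          · rw [mul_assoc, mul_assoc, wPerm_disjoint_comm hpq]
      · -- genOf a ⊆ w_A '' genOf b :  A ⊆ B
        have hs1 : (intervalFinset n p q) ⊆ (intervalFinset n m r).image ⇑(wPerm n p q) := hsub
        rw [← hAA, Finset.image_subset_image_iff (wPerm n p q).injective] at hs1
        have hpq : m ≤ p ∧ q ≤ r :=
          intervalFinset_subset ⟨ha1, ha2, ha3⟩ ⟨hb1, hb2, hb3⟩ hs1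
        have hc : (m + r - q, m + r - p) ∈ cactusSet n := by
          constructor
          · omega
          constructor
          · omega
          · omega
        set c : cactusSet n := ⟨(m + r - q, m + r - p), hc⟩ with hcdef
        have hrel : (PresentedGroup.of b : CactusGroup n) * PresentedGroup.of c =
            PresentedGroup.of a * PresentedGroup.of b := by
          apply cactus_j3 b c a
          · show m ≤ m + r - q; omega
          · show m + r - p ≤ r; omega
          · show p = m + r - (m + r - p); omega
          · show q = m + r - (m + r - q); omega
        have hfixB : (intervalFinset n m r).image ⇑(wPerm n p q) = intervalFinset n m r :=
          image_wPerm_sub ha1 hpq.1 ha2 hpq.2 hb3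
        have hCA : (intervalFinset n (m + r - q) (m + r - p)).image ⇑(wPerm n m r) =
            intervalFinset n p q := by
          rw [image_wPerm_nested hb1 (by omega) (by omega) (by omega) hb3]
          congr 1 <;> omega
        refine ⟨b :: c :: T, ?_, ?_⟩
        · simp only [List.map_cons, List.prod_cons]
          rw [← mul_assoc, hrel, mul_assoc]
        · show permGen n σ (genOf n b) :: permGen n (σ * wPerm n m r) (genOf n c) ::
            gw n (σ * wPerm n m r * wPerm n (m + r - q) (m + r - p)) T = _
          congr 1
          · apply Subtype.ext
            show (intervalFinset n m r).image ⇑σ = (intervalFinset n m r).image ⇑(σ * wPerm n p q)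
            rw [Equiv.Perm.coe_mul, ← Finset.image_image, hfixB]
          congr 1
          · apply Subtype.ext
            show (intervalFinset n (m + r - q) (m + r - p)).image ⇑(σ * wPerm n m r) =
              (intervalFinset n p q).image ⇑σ
            rw [Equiv.Perm.coe_mul, ← Finset.image_image, hCA]
          · rw [mul_assoc, mul_assoc, wPerm_nested_comm' hb1 hpq.1 ha2 hpq.2 hb3]
      · -- w_A '' genOf b ⊆ genOf a : B ⊆ A
        have hs1 : (intervalFinset n m r).image ⇑(wPerm n p q) ⊆ intervalFinset n p q := hsup
        rw [← hAA, Finset.image_subset_image_iff (wPerm n p q).injective] at hs1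
        have hpq : p ≤ m ∧ r ≤ q :=
          intervalFinset_subset ⟨hb1, hb2, hb3⟩ ⟨ha1, ha2, ha3⟩ hs1
        have hc : (p + q - r, p + q - m) ∈ cactusSet n := by
          refine ⟨by omega, by omega, by omega⟩
        set c : cactusSet n := ⟨(p + q - r, p + q - m), hc⟩ with hcdef
        have hrel : (PresentedGroup.of a : CactusGroup n) * PresentedGroup.of b =
            PresentedGroup.of c * PresentedGroup.of a := by
          apply cactus_j3 a b c
          · exact hpq.1
          · exact hpq.2
          · rfl
          · rfl
        have hCB : intervalFinset n (p + q - r) (p + q - m) =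
            (intervalFinset n m r).image ⇑(wPerm n p q) :=
          (image_wPerm_nested ha1 hpq.1 hb2 hpq.2 ha3).symm
        have hCfix : (intervalFinset n p q).image ⇑(wPerm n (p + q - r) (p + q - m)) =
            intervalFinset n p q :=
          image_wPerm_sub (by omega) (by omega) (by omega) (by omega) ha3
        refine ⟨c :: a :: T, ?_, ?_⟩
        · simp only [List.map_cons, List.prod_cons]
          rw [← mul_assoc, ← hrel, mul_assoc]
        · show permGen n σ (genOf n c) :: permGen n (σ * wPerm n (p + q - r) (p + q - m))
            (genOf n a) :: gw n (σ * wPerm n (p + q - r) (p + q - m) * wPerm n p q) T = _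
          congr 1
          · apply Subtype.ext
            show (intervalFinset n (p + q - r) (p + q - m)).image ⇑σ =
              (intervalFinset n m r).image ⇑(σ * wPerm n p q)
            rw [Equiv.Perm.coe_mul, ← Finset.image_image, hCB]
          congr 1
          · apply Subtype.ext
            show (intervalFinset n p q).image ⇑(σ * wPerm n (p + q - r) (p + q - m)) =
              (intervalFinset n p q).image ⇑σ
            rw [Equiv.Perm.coe_mul, ← Finset.image_image, hCfix]
          · rw [mul_assoc, mul_assoc, wPerm_nested_comm ha1 hpq.1 hb2 hpq.2 ha3]
    · -- delete case
      have heq1 : (intervalFinset n m r).image ⇑(σ * wPerm n p q) =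
          (intervalFinset n p q).image ⇑σ := congrArg Subtype.val heq
      rw [Equiv.Perm.coe_mul, ← Finset.image_image] at heq1
      have heq2 : (intervalFinset n m r).image ⇑(wPerm n p q) = intervalFinset n p q := by
        have hinj : Function.Injective (Finset.image ⇑σ) :=
          Finset.image_injective σ.injective
        exact hinj heq1
      have heq3 : intervalFinset n m r = intervalFinset n p q := by
        have := congrArg (Finset.image ⇑(wPerm n p q)) heq2
        rwa [image_image_wPerm_self, hAA] at this
      obtain ⟨hm, hr⟩ := intervalFinset_inj ⟨hb1, hb2, hb3⟩ ⟨ha1, ha2, ha3⟩ heq3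
      subst hm
      subst hr
      refine ⟨T, ?_, ?_⟩
      · simp only [List.map_cons, List.prod_cons]
        rw [← mul_assoc]
        have : (PresentedGroup.of a : CactusGroup n) * PresentedGroup.of b = 1 := cactus_sq a
        rw [this, one_mul]
      · rw [mul_assoc, wPerm_mul_self, mul_one]
    · -- cons case
      obtain ⟨L', h1, h2⟩ := ih (σ * wPerm n p q) M' hM'
      refine ⟨a :: L', ?_, ?_⟩
      · simp only [List.map_cons, List.prod_cons, h1]
      · show permGen n σ (genOf n a) :: gw n (σ * wPerm n p q) L' = _
        rw [h2]

end LiftStep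

section Glue

variable {n : ℕ}

lemma gw_cons (σ : Equiv.Perm (Fin n)) (a : cactusSet n) (L : List (cactusSet n)) :
    gw n σ (a :: L) = permGen n σ (genOf n a) :: gw n (σ * wPerm n a.1.1 a.1.2) L := rfl

lemma lift_chain (σ : Equiv.Perm (Fin n)) : ∀ {W M : List (GaussGen n)},
    Relation.ReflTransGen (Racg.Step (gaussE n)) W M → ∀ L : List (cactusSet n), gw n σ L = W →
    ∃ L', ((L'.map PresentedGroup.of).prod : CactusGroup n) = (L.map PresentedGroup.of).prod ∧
      gw n σ L' = M := by
  intro W M h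
  induction h using Relation.ReflTransGen.head_induction_on with
  | refl => intro L hL; exact ⟨L, rfl, hL⟩
  | head hstep _ ih =>
    intro L hL
    obtain ⟨L1, h1, h2⟩ := lift_step L σ _ (hL ▸ hstep)
    obtain ⟨L2, h3, h4⟩ := ih L1 h2
    exact ⟨L2, h3.trans h1, h4⟩

variable (ρ : CactusGroup n →* SemidirectProduct (GaussGroup n) (Equiv.Perm (Fin n)) (permAut n))
  (hρ : ∀ (p q : ℕ) (h : (p, q) ∈ cactusSet n),
    ρ (PresentedGroup.of ⟨(p, q), h⟩) =
      ⟨PresentedGroup.of ⟨intervalFinset n p q, two_le_intervalFinset_card h⟩, wPerm n p q⟩)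

include hρ

lemma rho_of (a : cactusSet n) : ρ (PresentedGroup.of a) =
    ⟨PresentedGroup.of (genOf n a), wPerm n a.1.1 a.1.2⟩ := by
  obtain ⟨⟨p, q⟩, ha⟩ := a
  exact hρ p q ha

lemma rho_left_word : ∀ (L : List (cactusSet n)) (σ : Equiv.Perm (Fin n)),
    permHom n σ ((ρ ((L.map PresentedGroup.of).prod)).left) =
      (((gw n σ L).map PresentedGroup.of).prod : GaussGroup n) := by
  intro L
  induction L with
  | nil =>
    intro σ
    show permHom n σ ((ρ (([] : List (CactusGroup n))).prod).left) = 1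
    rw [List.prod_nil, map_one, SemidirectProduct.one_left, map_one]
  | cons a L ih =>
    intro σ
    rw [gw_cons, List.map_cons, List.prod_cons, List.map_cons, List.prod_cons, map_mul,
      rho_of ρ hρ a, SemidirectProduct.mul_left]
    show permHom n σ (PresentedGroup.of (genOf n a) *
        permHom n (wPerm n a.1.1 a.1.2) ((ρ ((L.map PresentedGroup.of).prod)).left)) = _
    rw [map_mul, permHom_of, permHom_apply_apply, ih]

lemma rho_right_eq : ∀ c : CactusGroup n, (ρ c).right = sHom n c := by
  have h : (SemidirectProduct.rightHom (φ := permAut n)).comp ρ = sHom n := by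
    apply PresentedGroup.ext
    intro x
    obtain ⟨⟨p, q⟩, hx⟩ := x
    rw [MonoidHom.comp_apply, hρ p q hx]
    show wPerm n p q = sHom n (PresentedGroup.of ⟨(p, q), hx⟩)
    rw [sHom, PresentedGroup.toGroup.of]
  intro c
  exact DFunLike.congr_fun h c

lemma rho_injective_aux (c : CactusGroup n) (h : ρ c = 1) : c = 1 := by
  obtain ⟨L, hL⟩ := exists_word c
  subst hL
  have h1 := rho_left_word ρ hρ L 1
  rw [h, SemidirectProduct.one_left, map_one] at h1
  have hrels : ∀ r ∈ gaussRels n, (∃ a : GaussGen n, r = FreeGroup.of a * FreeGroup.of a) ∨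
      ∃ a b : GaussGen n, gaussE n a b ∧ r = FreeGroup.of a * FreeGroup.of b *
        (FreeGroup.of a)⁻¹ * (FreeGroup.of b)⁻¹ := by
    rintro r (⟨a, rfl⟩ | ⟨a, b, hab, rfl⟩)
    · exact Or.inl ⟨a, rfl⟩
    · refine Or.inr ⟨a, b, ?_, rfl⟩
      rcases hab with hd | hs
      · exact Or.inl hd
      · exact Or.inr (Or.inl hs)
  have chain := Racg.step_chain_of_one (gaussE_symm n) hrels (gw n 1 L) h1.symm
  obtain ⟨L', hprod, hnil⟩ := lift_chain 1 chain L rfl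
  have hlen : L' = [] := by
    have hl := gw_length n L' 1
    rw [hnil] at hl
    exact List.length_eq_zero_iff.mp hl.symm
  subst hlen
  rw [← hprod]
  rfl

end Glue

/-- For every `n ≥ 2` and the homomorphism `ρ : J_n → D_n ⋊ S_n` with
`ρ(s_{p,q}) = (τ_{[p,q]}, w_{p,q})`, the image of `PJ_n` under `ρ` lies in `D_n × {1}`, and
the induced map `PJ_n → D_n` is an injective group homomorphism. -/
theorem pure_cactus_embeds_in_racg (n : ℕ) (hn : 2 ≤ n)
    (ρ : CactusGroup n →* SemidirectProduct (GaussGroup n) (Equiv.Perm (Fin n)) (permAut n))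
    (hρ : ∀ (p q : ℕ) (h : (p, q) ∈ cactusSet n),
      ρ (PresentedGroup.of ⟨(p, q), h⟩) =
        ⟨PresentedGroup.of ⟨intervalFinset n p q, two_le_intervalFinset_card h⟩,
          wPerm n p q⟩) :
    (∀ c ∈ PureCactusGroup n, (ρ c).right = 1) ∧
    ∃ d : ↥(PureCactusGroup n) →* GaussGroup n,
      (∀ c : ↥(PureCactusGroup n), d c = (ρ (c : CactusGroup n)).left) ∧
      Function.Injective d := by
  have hright : ∀ c ∈ PureCactusGroup n, (ρ c).right = 1 := by
    intro c hc
    rw [rho_right_eq ρ hρ c]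
    exact hc
  refine ⟨hright, ?_⟩
  refine ⟨{ toFun := fun c => (ρ c.1).left, map_one' := ?_, map_mul' := ?_ }, fun c => rfl, ?_⟩
  · show (ρ ((1 : PureCactusGroup n) : CactusGroup n)).left = 1
    rw [OneMemClass.coe_one, map_one, SemidirectProduct.one_left]
  · intro x y
    show (ρ ((x * y : PureCactusGroup n) : CactusGroup n)).left =
      (ρ (x : CactusGroup n)).left * (ρ (y : CactusGroup n)).left
    rw [Subgroup.coe_mul, map_mul, SemidirectProduct.mul_left,
      hright (x : CactusGroup n) x.2, map_one, MulAut.one_apply]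
  · rw [injective_iff_map_eq_one]
    intro c hc
    have hcl : (ρ (c : CactusGroup n)).left = 1 := hc
    have hcr : (ρ (c : CactusGroup n)).right = 1 := hright _ c.2
    have h1 : ρ (c : CactusGroup n) = 1 := by
      apply SemidirectProduct.ext
      · rw [hcl, SemidirectProduct.one_left]
      · rw [hcr, SemidirectProduct.one_right]
    have h2 : (c : CactusGroup n) = 1 := rho_injective_aux ρ hρ _ h1
    exact Subtype.ext h2
end
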